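/- arXiv:1806.04031 — 5 statements merged into one kernel-verified Lean document; each statement's English description precedes it below -/
import Mathlib

section
/- Let M, A : ℝ → Mat(n×n, ℝ) be continuous with each A(τ) symmetric positive semidefinite, and let G₀ be a symmetric positive semidefinite n×n real matrix. Then the solution G(τ) of the Riccati matrix differential equation Ġ(τ) = −M(τ)ᵀG(τ) − G(τ)M(τ) − G(τ)A(τ)G(τ) with initial condition G(0) = G₀ exists for all τ ≥ 0 and is symmetric positive semidefinite for all τ ≥ 0. Furthermore, if G₀ is positive definite, then G(τ) is positive definite for all τ ≥ 0. -/
open Matrix Set Filter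

namespace RiccatiAux

variable {n : ℕ}


lemma norm_mulVec_le (L : Matrix (Fin n) (Fin n) ℝ) (x : Fin n → ℝ) :
    ‖L *ᵥ x‖ ≤ (∑ i, ∑ j, |L i j|) * ‖x‖ := by
  have hnn : 0 ≤ (∑ i, ∑ j, |L i j|) * ‖x‖ := by positivity
  refine (pi_norm_le_iff_of_nonneg hnn).2 fun i => ?_
  calc ‖(L *ᵥ x) i‖ = |∑ j, L i j * x j| := by
        simp [Matrix.mulVec, dotProduct, Real.norm_eq_abs]
  _ ≤ ∑ j, |L i j * x j| := Finset.abs_sum_le_sum_abs _ _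
  _ ≤ ∑ j, |L i j| * ‖x‖ := Finset.sum_le_sum fun j _ => by
        rw [abs_mul]
        exact mul_le_mul_of_nonneg_left (norm_le_pi_norm x j) (abs_nonneg _)
  _ = (∑ j, |L i j|) * ‖x‖ := (Finset.sum_mul _ _ _).symm
  _ ≤ (∑ i, ∑ j, |L i j|) * ‖x‖ := by
        refine mul_le_mul_of_nonneg_right ?_ (norm_nonneg _)
        exact Finset.single_le_sum (f := fun i => ∑ j, |L i j|)
          (fun i _ => by positivity) (Finset.mem_univ i)

lemma hasDerivWithinAt_singleton {E : Type*} [NormedAddCommGroup E] [NormedSpace ℝ E]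
    (f : ℝ → E) (f' : E) (x : ℝ) : HasDerivWithinAt f f' {x} x := by
  rw [hasDerivWithinAt_iff_tendsto_slope]
  simp [Set.diff_self]

/-- Glue two solutions matching at the junction. -/
lemma glue_sol {E : Type*} [NormedAddCommGroup E] [NormedSpace ℝ E]
    (f : ℝ → E → E) (va vb : ℝ → E) (a b c : ℝ) (hab : a ≤ b) (hbc : b ≤ c)
    (heq : va b = vb b)
    (ha : ∀ t ∈ Icc a b, HasDerivWithinAt va (f t (va t)) (Icc a b) t)
    (hb : ∀ t ∈ Icc b c, HasDerivWithinAt vb (f t (vb t)) (Icc b c) t) :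
    ∃ u : ℝ → E, (∀ t ∈ Icc a b, u t = va t) ∧
      ∀ t ∈ Icc a c, HasDerivWithinAt u (f t (u t)) (Icc a c) t := by
  classical
  set u : ℝ → E := fun t => if t ≤ b then va t else vb t with hu
  have hu1 : ∀ t ∈ Icc a b, u t = va t := fun t ht => by simp [hu, ht.2]
  have hu2 : ∀ t ∈ Icc b c, u t = vb t := by
    intro t ht
    by_cases h : t ≤ b
    · have : t = b := le_antisymm h ht.1
      simp [hu, this, heq]
    · simp [hu, h]
  refine ⟨u, hu1, fun t ht => ?_⟩
  have hunion : Icc a b ∪ Icc b c = Icc a c := Set.Icc_union_Icc_eq_Icc hab hbc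
  rw [← hunion]
  apply HasDerivWithinAt.union
  · by_cases h : t ∈ Icc a b
    · have := (ha t h).congr (fun s hs => (hu1 s hs)) (hu1 t h)
      rwa [hu1 t h]
    · exact HasFDerivWithinAt.of_notMem_closure (by rwa [closure_Icc])
  · by_cases h : t ∈ Icc b c
    · have := (hb t h).congr (fun s hs => (hu2 s hs)) (hu2 t h)
      rwa [hu2 t h]
    · exact HasFDerivWithinAt.of_notMem_closure (by rwa [closure_Icc])

lemma local_sol (L : ℝ → Matrix (Fin n) (Fin n) ℝ) (c : ℝ → Fin n → ℝ)
    (hL : ∀ i j, Continuous fun t => L t i j) (hc : Continuous c)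
    (T : ℝ) (hT : 0 ≤ T) :
    ∃ δ > 0, ∀ t₀ ∈ Icc (-T) T, ∀ x₀ : Fin n → ℝ,
      ∃ v : ℝ → Fin n → ℝ, v t₀ = x₀ ∧
        ∀ t ∈ Icc (t₀ - δ) (t₀ + δ),
          HasDerivWithinAt v (L t *ᵥ v t + c t) (Icc (t₀ - δ) (t₀ + δ)) t := by
  -- bounds on the compact interval [-T-1, T+1]
  have hk : Continuous fun t => ∑ i, ∑ j, |L t i j| := by
    continuity
  obtain ⟨K, hK⟩ := (isCompact_Icc (a := -T-1) (b := T+1)).exists_bound_of_continuousOn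
    (hk.continuousOn)
  obtain ⟨C₀, hC₀⟩ := (isCompact_Icc (a := -T-1) (b := T+1)).exists_bound_of_continuousOn
    hc.continuousOn
  -- replace by nonneg versions
  set K' : ℝ := max K 0 with hK'def
  set C' : ℝ := max C₀ 0 with hC'def
  have hK'0 : 0 ≤ K' := le_max_right _ _
  have hC'0 : 0 ≤ C' := le_max_right _ _
  have hKb : ∀ t ∈ Icc (-T-1) (T+1), ∑ i, ∑ j, |L t i j| ≤ K' := by
    intro t ht
    calc ∑ i, ∑ j, |L t i j| ≤ ‖∑ i, ∑ j, |L t i j|‖ := le_abs_self _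
    _ ≤ K := hK t ht
    _ ≤ K' := le_max_left _ _
  have hCb : ∀ t ∈ Icc (-T-1) (T+1), ‖c t‖ ≤ C' := fun t ht =>
    (hC₀ t ht).trans (le_max_left _ _)
  set δ : ℝ := 1 / (2 * K' + C' + 1) with hδdef
  have hden : (0:ℝ) < 2 * K' + C' + 1 := by positivity
  have hδ0 : 0 < δ := by positivity
  have hδ1 : δ ≤ 1 := by
    rw [hδdef, div_le_one hden]; linarith
  refine ⟨δ, hδ0, fun t₀ ht₀ x₀ => ?_⟩
  set R : ℝ := ‖x₀‖ + 1 with hRdef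
  set C : ℝ := K' * (2 * ‖x₀‖ + 1) + C' with hCdef
  have hsub : Icc (t₀ - δ) (t₀ + δ) ⊆ Icc (-T-1) (T+1) := by
    apply Icc_subset_Icc <;> [linarith [ht₀.1]; linarith [ht₀.2]]
  have hR0 : 0 ≤ R := by rw [hRdef]; positivity
  have hC0 : 0 ≤ C := by rw [hCdef]; positivity
  have ht₀mem : t₀ ∈ Icc (t₀ - δ) (t₀ + δ) := ⟨by linarith, by linarith⟩
  have hpl : IsPicardLindelof (fun t x => L t *ᵥ x + c t)
      (⟨t₀, ht₀mem⟩ : Icc (t₀ - δ) (t₀ + δ)) x₀ R.toNNReal 0 C.toNNReal K'.toNNReal := by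
    constructor
    · intro t ht
      apply LipschitzOnWith.of_dist_le_mul
      intro x hx y hy
      have h1 : L t *ᵥ x + c t - (L t *ᵥ y + c t) = L t *ᵥ (x - y) := by
        rw [Matrix.mulVec_sub]; abel
      rw [dist_eq_norm, dist_eq_norm, h1]
      calc ‖L t *ᵥ (x - y)‖ ≤ (∑ i, ∑ j, |L t i j|) * ‖x - y‖ := norm_mulVec_le _ _
      _ ≤ K' * ‖x - y‖ :=
          mul_le_mul_of_nonneg_right (hKb t (hsub ht)) (norm_nonneg _)
      _ = (K'.toNNReal : ℝ) * ‖x - y‖ := by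
          rw [Real.coe_toNNReal _ hK'0]
    · intro x hx
      apply Continuous.continuousOn
      have : Continuous fun t => L t *ᵥ x := by
        apply continuous_pi
        intro i
        simp only [Matrix.mulVec, dotProduct]
        exact continuous_finset_sum _ fun j _ => ((hL i j).mul continuous_const)
      exact this.add hc
    · intro t ht x hx
      rw [Real.coe_toNNReal _ hR0] at hx
      rw [Real.coe_toNNReal _ hC0]
      have hxn : ‖x‖ ≤ ‖x₀‖ + R := by
        have := mem_closedBall_iff_norm.1 hx
        calc ‖x‖ = ‖x₀ + (x - x₀)‖ := by ring_nf
        _ ≤ ‖x₀‖ + ‖x - x₀‖ := norm_add_le _ _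
        _ ≤ ‖x₀‖ + R := by linarith
      calc ‖L t *ᵥ x + c t‖ ≤ ‖L t *ᵥ x‖ + ‖c t‖ := norm_add_le _ _
      _ ≤ (∑ i, ∑ j, |L t i j|) * ‖x‖ + C' := by
          exact add_le_add (norm_mulVec_le _ _) (hCb t (hsub ht))
      _ ≤ K' * (‖x₀‖ + R) + C' := by
          refine add_le_add_left ?_ _
          apply mul_le_mul (hKb t (hsub ht)) hxn (norm_nonneg _) hK'0
      _ = C := by rw [hCdef, hRdef]; ring
    · rw [NNReal.coe_zero, sub_zero, Real.coe_toNNReal _ hC0, Real.coe_toNNReal _ hR0]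
      show C * max (t₀ + δ - t₀) (t₀ - (t₀ - δ)) ≤ R
      have : max (t₀ + δ - t₀) (t₀ - (t₀ - δ)) = δ := by
        rw [add_sub_cancel_left, sub_sub_cancel, max_self]
      rw [this, hCdef, hRdef, hδdef, mul_one_div, div_le_iff₀ hden]
      nlinarith [norm_nonneg x₀]
  obtain ⟨v, hv0, hvd⟩ := hpl.exists_eq_forall_mem_Icc_hasDerivWithinAt₀
  exact ⟨v, hv0, hvd⟩

lemma forward_sol (L : ℝ → Matrix (Fin n) (Fin n) ℝ) (c : ℝ → Fin n → ℝ)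
    (hL : ∀ i j, Continuous fun t => L t i j) (hc : Continuous c)
    (T : ℝ) (hT : 0 ≤ T) (x₀ : Fin n → ℝ) :
    ∃ v : ℝ → Fin n → ℝ, v 0 = x₀ ∧
      ∀ t ∈ Icc 0 T, HasDerivWithinAt v (L t *ᵥ v t + c t) (Icc 0 T) t := by
  obtain ⟨δ, hδ0, hloc⟩ := local_sol L c hL hc T hT
  have main : ∀ m : ℕ, ∃ v : ℝ → Fin n → ℝ, v 0 = x₀ ∧
      ∀ t ∈ Icc 0 (min T (m * δ)),
        HasDerivWithinAt v (L t *ᵥ v t + c t) (Icc 0 (min T (m * δ))) t := by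
    intro m
    induction m with
    | zero =>
      refine ⟨fun _ => x₀, rfl, ?_⟩
      have h0 : min T ((0:ℕ) * δ) = 0 := by simp [hT]
      rw [h0]
      intro t ht
      rw [Set.Icc_self] at ht ⊢
      rw [Set.mem_singleton_iff] at ht
      subst ht
      exact hasDerivWithinAt_singleton _ _ _
    | succ m ih =>
      obtain ⟨v, hv0, hvd⟩ := ih
      set b := min T (m * δ) with hbdef
      set b' := min T ((m + 1 : ℕ) * δ) with hb'def
      have hb0 : 0 ≤ b := le_min hT (by positivity)
      have hbT : b ≤ T := min_le_left _ _
      have hmm : (m : ℝ) * δ ≤ ((m:ℕ) + 1 : ℕ) * δ := by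
        push_cast; nlinarith
      rcases le_or_gt T (m * δ) with h | h
      · have hb : b = T := min_eq_left h
        have hb' : b' = T := min_eq_left (by push_cast at hmm ⊢; linarith)
        refine ⟨v, hv0, ?_⟩
        rw [hb'] ; rw [hb] at hvd; exact hvd
      · have hb : b = m * δ := min_eq_right h.le
        obtain ⟨w, hwb, hwd⟩ := hloc b ⟨by linarith, hbT⟩ (v b)
        have hbb' : b ≤ b' := le_min hbT (by rw [hb]; exact hmm)
        have hsub : Icc b b' ⊆ Icc (b - δ) (b + δ) := by
          apply Icc_subset_Icc (by linarith)
          calc b' ≤ ((m:ℕ) + 1 : ℕ) * δ := min_le_right _ _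
          _ = b + δ := by rw [hb]; push_cast; ring
        obtain ⟨u, hu1, hu2⟩ := glue_sol (fun t x => L t *ᵥ x + c t) v w 0 b b' hb0 hbb'
          hwb.symm hvd (fun t ht => (hwd t (hsub ht)).mono hsub)
        exact ⟨u, by rw [hu1 0 ⟨le_refl _, hb0⟩, hv0], hu2⟩
  obtain ⟨m, hm⟩ := exists_nat_ge (T / δ)
  have hTm : T ≤ m * δ := by
    rw [div_le_iff₀ hδ0] at hm; linarith
  obtain ⟨v, hv0, hvd⟩ := main m
  rw [min_eq_left hTm] at hvd
  exact ⟨v, hv0, hvd⟩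

lemma Icc_sol (L : ℝ → Matrix (Fin n) (Fin n) ℝ) (c : ℝ → Fin n → ℝ)
    (hL : ∀ i j, Continuous fun t => L t i j) (hc : Continuous c)
    (T : ℝ) (hT : 0 ≤ T) (x₀ : Fin n → ℝ) :
    ∃ v : ℝ → Fin n → ℝ, v 0 = x₀ ∧
      ∀ t ∈ Icc (-T) T, HasDerivWithinAt v (L t *ᵥ v t + c t) (Icc (-T) T) t := by
  obtain ⟨vf, hvf0, hvfd⟩ := forward_sol L c hL hc T hT x₀
  set L' : ℝ → Matrix (Fin n) (Fin n) ℝ := fun t => -L (-t) with hL'def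
  set c' : ℝ → Fin n → ℝ := fun t => -c (-t) with hc'def
  have hL' : ∀ i j, Continuous fun t => L' t i j := by
    intro i j
    have : (fun t => L' t i j) = fun t => -(L (-t) i j) := by
      funext t; simp [hL'def]
    rw [this]
    exact ((hL i j).comp continuous_neg).neg
  have hc' : Continuous c' := (hc.comp continuous_neg).neg
  obtain ⟨w, hw0, hwd⟩ := forward_sol L' c' hL' hc' T hT x₀
  set vb : ℝ → Fin n → ℝ := fun t => w (-t) with hvbdef
  have hvb0 : vb 0 = x₀ := by simp [hvbdef, hw0]
  have hvbd : ∀ t ∈ Icc (-T) 0, HasDerivWithinAt vb (L t *ᵥ vb t + c t) (Icc (-T) 0) t := by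
    intro t ht
    have hmt : -t ∈ Icc 0 T := ⟨by linarith [ht.2], by linarith [ht.1]⟩
    have hmaps : MapsTo Neg.neg (Icc (-T) 0) (Icc 0 T) := fun s hs =>
      ⟨by linarith [hs.2], by linarith [hs.1]⟩
    have hneg : HasDerivWithinAt (fun s : ℝ => -s) (-1) (Icc (-T) 0) t :=
      (hasDerivAt_neg t).hasDerivWithinAt
    have := (hwd (-t) hmt).scomp t hneg hmaps
    refine this.congr_deriv (Eq.symm ?_)
    simp only [hvbdef, hL'def, hc'def, neg_neg, Matrix.neg_mulVec]
    simp
  exact (glue_sol (fun t x => L t *ᵥ x + c t) vb vf (-T) 0 T (neg_nonpos.2 hT) hT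
    (by rw [hvb0, hvf0]) hvbd hvfd).imp fun u ⟨hu1, hu2⟩ =>
    ⟨by rw [hu1 0 ⟨neg_nonpos.2 hT, le_refl _⟩, hvb0], hu2⟩

/-- Uniqueness for the linear ODE on a closed interval. -/
lemma linear_unique_on (L : ℝ → Matrix (Fin n) (Fin n) ℝ) (c : ℝ → Fin n → ℝ)
    (hL : ∀ i j, Continuous fun t => L t i j) (hc : Continuous c)
    {a b t₀ : ℝ} (ht₀ : t₀ ∈ Ioo a b) (u w : ℝ → Fin n → ℝ)
    (hu : ContinuousOn u (Icc a b))
    (hud : ∀ t ∈ Ioo a b, HasDerivAt u (L t *ᵥ u t + c t) t)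
    (hw : ContinuousOn w (Icc a b))
    (hwd : ∀ t ∈ Ioo a b, HasDerivAt w (L t *ᵥ w t + c t) t)
    (heq : u t₀ = w t₀) : EqOn u w (Icc a b) := by
  have hab : a ≤ b := le_of_lt (lt_trans ht₀.1 ht₀.2)
  set cl : ℝ → ℝ := fun t => max a (min b t) with hcldef
  have hclmem : ∀ t, cl t ∈ Icc a b := fun t =>
    ⟨le_max_left _ _, max_le hab (min_le_left _ _)⟩
  have hclid : ∀ t ∈ Ioo a b, cl t = t := by
    intro t ht
    show max a (min b t) = t
    rw [min_eq_right ht.2.le]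
    exact max_eq_right ht.1.le
  have hk : Continuous fun t => ∑ i, ∑ j, |L t i j| := by continuity
  obtain ⟨K, hK⟩ := (isCompact_Icc (a := a) (b := b)).exists_bound_of_continuousOn
    hk.continuousOn
  set K' : ℝ := max K 0 with hK'def
  have hK'0 : 0 ≤ K' := le_max_right _ _
  have hKb : ∀ t ∈ Icc a b, ∑ i, ∑ j, |L t i j| ≤ K' := fun t ht =>
    ((le_abs_self _).trans (hK t ht)).trans (le_max_left _ _)
  set v' : ℝ → (Fin n → ℝ) → (Fin n → ℝ) := fun t x => L (cl t) *ᵥ x + c (cl t) with hv'def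
  have hlip : ∀ t, LipschitzOnWith K'.toNNReal (v' t) univ := by
    intro t
    apply LipschitzOnWith.of_dist_le_mul
    intro x _ y _
    have h1 : v' t x - v' t y = L (cl t) *ᵥ (x - y) := by
      simp [hv'def, Matrix.mulVec_sub]; try abel
    rw [dist_eq_norm, dist_eq_norm, h1]
    calc ‖L (cl t) *ᵥ (x - y)‖ ≤ (∑ i, ∑ j, |L (cl t) i j|) * ‖x - y‖ := norm_mulVec_le _ _
    _ ≤ K' * ‖x - y‖ :=
        mul_le_mul_of_nonneg_right (hKb _ (hclmem t)) (norm_nonneg _)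
    _ = (K'.toNNReal : ℝ) * ‖x - y‖ := by rw [Real.coe_toNNReal _ hK'0]
  exact ODE_solution_unique_of_mem_Icc (v := v') (s := fun _ => univ) (fun t _ => hlip t) ht₀
    hu (fun t ht => by rw [hv'def]; simp only [hclid t ht]; exact hud t ht)
    (fun t _ => mem_univ _)
    hw (fun t ht => by rw [hv'def]; simp only [hclid t ht]; exact hwd t ht)
    (fun t _ => mem_univ _) heq

/-- Global existence for the linear ODE `v' = L t *ᵥ v + c t`. -/
theorem exists_linear_ode (L : ℝ → Matrix (Fin n) (Fin n) ℝ) (c : ℝ → Fin n → ℝ)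
    (hL : ∀ i j, Continuous fun t => L t i j) (hc : Continuous c) (x₀ : Fin n → ℝ) :
    ∃ v : ℝ → Fin n → ℝ, v 0 = x₀ ∧ ∀ t, HasDerivAt v (L t *ᵥ v t + c t) t := by
  have h : ∀ N : ℕ, ∃ v : ℝ → Fin n → ℝ, v 0 = x₀ ∧
      ∀ t ∈ Icc (-(N+1:ℝ)) (N+1:ℝ),
        HasDerivWithinAt v (L t *ᵥ v t + c t) (Icc (-(N+1:ℝ)) (N+1:ℝ)) t := by
    intro N
    exact Icc_sol L c hL hc (N+1) (by positivity) x₀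
  choose V hV0 hVd using h
  -- interior HasDerivAt
  have hVint : ∀ (N : ℕ) (t : ℝ), |t| < N + 1 → HasDerivAt (V N) (L t *ᵥ V N t + c t) t := by
    intro N t ht
    rw [abs_lt] at ht
    exact (hVd N t ⟨by linarith [ht.1], ht.2.le⟩).hasDerivAt
      (Icc_mem_nhds (by linarith [ht.1]) ht.2)
  have hVcont : ∀ N : ℕ, ContinuousOn (V N) (Icc (-(N+1:ℝ)) (N+1:ℝ)) := fun N t ht =>
    (hVd N t ht).continuousWithinAt
  have agree : ∀ (N M : ℕ) (t : ℝ), |t| < N + 1 → |t| < M + 1 → V N t = V M t := by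
    intro N M t htN htM
    set P : ℝ := min (N+1 : ℝ) (M+1 : ℝ) with hPdef
    have hP0 : 0 < P := lt_min (by positivity) (by positivity)
    have hPN : P ≤ N + 1 := min_le_left _ _
    have hPM : P ≤ M + 1 := min_le_right _ _
    have key : EqOn (V N) (V M) (Icc (-P) P) := by
      apply linear_unique_on L c hL hc (t₀ := 0) ⟨by linarith, hP0⟩
      · exact (hVcont N).mono (Icc_subset_Icc (by linarith) hPN)
      · intro s hs
        rw [mem_Ioo, ← abs_lt] at hs
        exact hVint N s (lt_of_lt_of_le hs hPN)
      · exact (hVcont M).mono (Icc_subset_Icc (by linarith) hPM)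
      · intro s hs
        rw [mem_Ioo, ← abs_lt] at hs
        exact hVint M s (lt_of_lt_of_le hs hPM)
      · rw [hV0, hV0]
    have ht : t ∈ Icc (-P) P := by
      rw [mem_Icc, ← abs_le]
      exact le_min htN.le htM.le
    exact key ht
  refine ⟨fun t => V ⌈|t|⌉₊ t, by simpa using hV0 0, fun τ => ?_⟩
  set N : ℕ := ⌈|τ|⌉₊ with hNdef
  have hτ : |τ| < N + 1 := lt_of_le_of_lt (Nat.le_ceil _) (by exact_mod_cast lt_add_one _)
  have hopen : IsOpen {s : ℝ | |s| < (N:ℝ) + 1} :=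
    isOpen_lt continuous_abs continuous_const
  have hev : (fun t => V ⌈|t|⌉₊ t) =ᶠ[nhds τ] V N := by
    filter_upwards [hopen.mem_nhds hτ] with s hs
    exact agree ⌈|s|⌉₊ N s (lt_of_le_of_lt (Nat.le_ceil _) (by exact_mod_cast lt_add_one _)) hs
  have hd := hVint N τ hτ
  exact hd.congr_of_eventuallyEq hev

/-- Lipschitz constants for the clamped coefficient. -/
lemma clamp_lipschitz (L : ℝ → Matrix (Fin n) (Fin n) ℝ)
    (hL : ∀ i j, Continuous fun t => L t i j) (a b : ℝ) (hab : a ≤ b) :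
    ∃ K : NNReal, ∀ t, LipschitzOnWith K
      (fun x : Fin n → ℝ => L (max a (min b t)) *ᵥ x) univ := by
  have hk : Continuous fun t => ∑ i, ∑ j, |L t i j| := by continuity
  obtain ⟨K, hK⟩ := (isCompact_Icc (a := a) (b := b)).exists_bound_of_continuousOn
    hk.continuousOn
  set K' : ℝ := max K 0 with hK'def
  have hK'0 : 0 ≤ K' := le_max_right _ _
  refine ⟨K'.toNNReal, fun t => ?_⟩
  have hmem : max a (min b t) ∈ Icc a b :=
    ⟨le_max_left _ _, max_le hab (min_le_left _ _)⟩
  apply LipschitzOnWith.of_dist_le_mul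
  intro x _ y _
  have h1 : L (max a (min b t)) *ᵥ x - L (max a (min b t)) *ᵥ y
      = L (max a (min b t)) *ᵥ (x - y) := by rw [Matrix.mulVec_sub]
  rw [dist_eq_norm, dist_eq_norm, h1]
  calc ‖L (max a (min b t)) *ᵥ (x - y)‖
      ≤ (∑ i, ∑ j, |L (max a (min b t)) i j|) * ‖x - y‖ := norm_mulVec_le _ _
  _ ≤ K' * ‖x - y‖ := by
      refine mul_le_mul_of_nonneg_right ?_ (norm_nonneg _)
      exact ((le_abs_self _).trans (hK _ hmem)).trans (le_max_left _ _)
  _ = (K'.toNNReal : ℝ) * ‖x - y‖ := by rw [Real.coe_toNNReal _ hK'0]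

section MatDeriv

attribute [local instance] Matrix.linftyOpNormedRing Matrix.linftyOpNormedAlgebra

noncomputable instance : CompleteSpace (Matrix (Fin n) (Fin n) ℝ) :=
  FiniteDimensional.complete ℝ _

/-- entrywise derivative iff matrix derivative (with the linfty operator norm). -/
lemma hasDerivAt_matrix {F : ℝ → Matrix (Fin n) (Fin n) ℝ} {F' : Matrix (Fin n) (Fin n) ℝ}
    {τ : ℝ} :
    HasDerivAt F F' τ ↔ ∀ i j, HasDerivAt (fun t => F t i j) (F' i j) τ := by
  constructor
  · intro h i j
    have hlin : IsLinearMap ℝ (fun P : Matrix (Fin n) (Fin n) ℝ => P i j) :=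
      ⟨fun P Q => rfl, fun c P => rfl⟩
    let φ : Matrix (Fin n) (Fin n) ℝ →L[ℝ] ℝ :=
      LinearMap.toContinuousLinearMap (IsLinearMap.mk' _ hlin)
    exact (φ.hasFDerivAt.comp_hasDerivAt τ h : HasDerivAt (fun t => φ (F t)) (φ F') τ)
  · intro h
    have h1 : HasDerivAt (fun t => ∑ i : Fin n, ∑ j : Fin n,
        F t i j • Matrix.single i j (1:ℝ))
        (∑ i : Fin n, ∑ j : Fin n, F' i j • Matrix.single i j (1:ℝ)) τ :=
      HasDerivAt.fun_sum fun i _ => HasDerivAt.fun_sum fun j _ => (h i j).smul_const _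
    simp only [smul_single, smul_eq_mul, mul_one] at h1
    have e1 : (fun t => ∑ i : Fin n, ∑ j : Fin n, Matrix.single i j (F t i j)) = F := by
      funext t
      exact (matrix_eq_sum_single (F t)).symm
    have e2 : (∑ i : Fin n, ∑ j : Fin n, Matrix.single i j (F' i j)) = F' :=
      (matrix_eq_sum_single F').symm
    rwa [e1, e2] at h1

lemma hasDerivAt_matrix_inv {X : ℝ → Matrix (Fin n) (Fin n) ℝ}
    {X' : Matrix (Fin n) (Fin n) ℝ} {τ : ℝ}
    (hdet : IsUnit (X τ).det) (hX : HasDerivAt X X' τ) :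
    HasDerivAt (fun t => (X t)⁻¹) (-((X τ)⁻¹ * X' * (X τ)⁻¹)) τ := by
  have hu : IsUnit (X τ) := (Matrix.isUnit_iff_isUnit_det _).2 hdet
  obtain ⟨u, hu⟩ := hu
  have h1 := hasFDerivAt_ringInverse (𝕜 := ℝ) u
  rw [hu] at h1
  have h2 := h1.comp_hasDerivAt τ hX
  have e1 : (fun t => Ring.inverse (X t)) = fun t => (X t)⁻¹ := by
    funext t; exact (Matrix.nonsing_inv_eq_ringInverse _).symm
  have e2 : ((↑u⁻¹ : Matrix (Fin n) (Fin n) ℝ)) = (X τ)⁻¹ := by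
    rw [← hu]; exact Matrix.coe_units_inv u
  simp only [Function.comp_def] at h2
  rw [e1] at h2
  refine h2.congr_deriv (Eq.symm ?_)
  simp only [ContinuousLinearMap.neg_apply, ContinuousLinearMap.mulLeftRight_apply, e2,
    Matrix.mul_assoc]


theorem stmt_0' (M A : ℝ → Matrix (Fin n) (Fin n) ℝ)
    (hM : ∀ i j, Continuous fun τ => M τ i j)
    (hA : ∀ i j, Continuous fun τ => A τ i j)
    (hApsd : ∀ τ, (A τ).PosSemidef)
    (G₀ : Matrix (Fin n) (Fin n) ℝ) (hG₀ : G₀.PosSemidef) :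
    ∃ G : ℝ → Matrix (Fin n) (Fin n) ℝ,
      G 0 = G₀ ∧
      (∀ τ, 0 ≤ τ → ∀ i j, HasDerivAt (fun t => G t i j)
        ((-(M τ)ᵀ * G τ - G τ * M τ - G τ * A τ * G τ) i j) τ) ∧
      (∀ τ, 0 ≤ τ → (G τ).PosSemidef) ∧
      (G₀.PosDef → ∀ τ, 0 ≤ τ → (G τ).PosDef) := by
  classical
  have creal : ∀ P : Matrix (Fin n) (Fin n) ℝ, Pᴴ = Pᵀ := by
    intro P; ext i j; simp [Matrix.conjTranspose_apply]
  have hAsymm : ∀ τ, (A τ)ᵀ = A τ := by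
    intro τ
    rw [← creal]
    exact (hApsd τ).1
  have hG₀symm : G₀ᵀ = G₀ := by
    rw [← creal]; exact hG₀.1
  -- the linear system: Y' = -Mᵀ Y,  X' = M X + A Y,  Y 0 = G₀, X 0 = 1
  have hMT : ∀ i j, Continuous fun t => (-(M t)ᵀ) i j := by
    intro i j
    simp only [Matrix.neg_apply, Matrix.transpose_apply]
    exact (hM j i).neg
  have hYex : ∀ j : Fin n, ∃ v : ℝ → Fin n → ℝ, v 0 = (fun i => G₀ i j) ∧
      ∀ t, HasDerivAt v ((-(M t)ᵀ) *ᵥ v t + (fun _ => 0) t) t := fun j =>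
    exists_linear_ode _ (fun _ => (0 : Fin n → ℝ)) hMT continuous_const _
  choose y hy0 hyd using hYex
  have hyd' : ∀ j t, HasDerivAt (y j) ((-(M t)ᵀ) *ᵥ y j t) t := by
    intro j t; simpa using hyd j t
  have hycont : ∀ j, Continuous (y j) := fun j =>
    continuous_iff_continuousAt.2 fun t => (hyd' j t).continuousAt
  have hcX : ∀ j, Continuous fun t => A t *ᵥ y j t := by
    intro j
    apply continuous_pi
    intro i
    simp only [Matrix.mulVec, dotProduct]
    exact continuous_finset_sum _ fun k _ =>
      (hA i k).mul ((continuous_apply k).comp (hycont j))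
  have hXex : ∀ j : Fin n, ∃ v : ℝ → Fin n → ℝ, v 0 = Pi.single j 1 ∧
      ∀ t, HasDerivAt v (M t *ᵥ v t + A t *ᵥ y j t) t := fun j =>
    exists_linear_ode M (fun t => A t *ᵥ y j t) hM (hcX j) _
  choose x hx0 hxd using hXex
  set Y : ℝ → Matrix (Fin n) (Fin n) ℝ := fun t => Matrix.of (fun i j => y j t i) with hYdef
  set X : ℝ → Matrix (Fin n) (Fin n) ℝ := fun t => Matrix.of (fun i j => x j t i) with hXdef
  have hY0 : Y 0 = G₀ := by
    ext i j; exact congrFun (hy0 j) i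
  have hX0 : X 0 = 1 := by
    ext i j
    show x j 0 i = _
    rw [hx0 j, Matrix.one_apply, Pi.single_apply]
  -- matrix derivatives
  have hYD : ∀ τ, HasDerivAt Y (-(M τ)ᵀ * Y τ) τ := by
    intro τ
    rw [hasDerivAt_matrix]
    intro i j
    have := (hasDerivAt_pi.1 (hyd' j τ)) i
    exact this
  have hXD : ∀ τ, HasDerivAt X (M τ * X τ + A τ * Y τ) τ := by
    intro τ
    rw [hasDerivAt_matrix]
    intro i j
    have := (hasDerivAt_pi.1 (hxd j τ)) i
    exact this
  -- kernel triviality on [0, ∞)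
  have hker : ∀ τ, 0 ≤ τ → ∀ v : Fin n → ℝ, X τ *ᵥ v = 0 → v = 0 := by
    intro τ hτ v hv
    rcases eq_or_lt_of_le hτ with h0 | hpos
    · rw [← h0, hX0, Matrix.one_mulVec] at hv
      exact hv
    by_contra hv0
    set u : ℝ → Fin n → ℝ := fun t => X t *ᵥ v with hudef
    set w : ℝ → Fin n → ℝ := fun t => Y t *ᵥ v with hwdef
    have hud : ∀ t, HasDerivAt u (M t *ᵥ u t + A t *ᵥ w t) t := by
      intro t
      rw [hasDerivAt_pi]
      intro i
      have h1 : HasDerivAt (fun t => ∑ j, X t i j * v j)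
          (∑ j, (M t * X t + A t * Y t) i j * v j) t :=
        HasDerivAt.fun_sum fun j _ => (hasDerivAt_matrix.1 (hXD t) i j).mul_const _
      have e1 : (fun t : ℝ => ∑ j, X t i j * v j) = fun t => u t i := by
        funext s; simp [hudef, Matrix.mulVec, dotProduct]
      have e2 : (∑ j, (M t * X t + A t * Y t) i j * v j)
          = (M t *ᵥ u t + A t *ᵥ w t) i := by
        have h3 : ((M t * X t + A t * Y t) *ᵥ v) i = (M t *ᵥ u t + A t *ᵥ w t) i := by
          rw [Matrix.add_mulVec, ← Matrix.mulVec_mulVec, ← Matrix.mulVec_mulVec]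
        simpa [Matrix.mulVec, dotProduct] using h3
      rw [e1, e2] at h1
      exact h1
    have hwd2 : ∀ t, HasDerivAt w ((-(M t)ᵀ) *ᵥ w t) t := by
      intro t
      rw [hasDerivAt_pi]
      intro i
      have h1 : HasDerivAt (fun t => ∑ j, Y t i j * v j)
          (∑ j, (-(M t)ᵀ * Y t) i j * v j) t :=
        HasDerivAt.fun_sum fun j _ => (hasDerivAt_matrix.1 (hYD t) i j).mul_const _
      have e1 : (fun t : ℝ => ∑ j, Y t i j * v j) = fun t => w t i := by
        funext s; simp [hwdef, Matrix.mulVec, dotProduct]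
      have e2 : (∑ j, (-(M t)ᵀ * Y t) i j * v j) = ((-(M t)ᵀ) *ᵥ w t) i := by
        have h3 : ((-(M t)ᵀ * Y t) *ᵥ v) i = ((-(M t)ᵀ) *ᵥ w t) i := by
          rw [← Matrix.mulVec_mulVec]
        simpa [Matrix.mulVec, dotProduct] using h3
      rw [e1, e2] at h1
      exact h1
    set φ : ℝ → ℝ := fun t => w t ⬝ᵥ u t with hφdef
    have hφd : ∀ t, HasDerivAt φ (w t ⬝ᵥ (A t *ᵥ w t)) t := by
      intro t
      have h1 : HasDerivAt (fun t => ∑ i, w t i * u t i)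
          (∑ i, (((-(M t)ᵀ) *ᵥ w t) i * u t i + w t i * (M t *ᵥ u t + A t *ᵥ w t) i)) t :=
        HasDerivAt.fun_sum fun i _ =>
          (hasDerivAt_pi.1 (hwd2 t) i).mul (hasDerivAt_pi.1 (hud t) i)
      have e1 : (fun t : ℝ => ∑ i, w t i * u t i) = φ := by
        funext s; simp [hφdef, dotProduct]
      have key : ((-(M t)ᵀ) *ᵥ w t) ⬝ᵥ u t + w t ⬝ᵥ (M t *ᵥ u t + A t *ᵥ w t)
          = w t ⬝ᵥ (A t *ᵥ w t) := by
        rw [dotProduct_add, Matrix.neg_mulVec, neg_dotProduct, Matrix.mulVec_transpose,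
          dotProduct_mulVec (w t) (M t) (u t)]
        ring
      have e2 : (∑ i, (((-(M t)ᵀ) *ᵥ w t) i * u t i + w t i * (M t *ᵥ u t + A t *ᵥ w t) i))
          = w t ⬝ᵥ (A t *ᵥ w t) := by
        rw [Finset.sum_add_distrib]
        exact key
      rw [e1, e2] at h1
      exact h1
    have hφmono : Monotone φ :=
      monotone_of_deriv_nonneg (fun t => (hφd t).differentiableAt)
        (fun t => by rw [(hφd t).deriv]; simpa using (hApsd t).dotProduct_mulVec_nonneg (w t))
    have hφτ : φ τ = 0 := by
      simp [hφdef, hudef, hv]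
    have hφ0 : 0 ≤ φ 0 := by
      have e0 : φ 0 = v ⬝ᵥ (G₀ *ᵥ v) := by
        simp only [hφdef, hudef, hwdef, hX0, hY0, Matrix.one_mulVec]
        exact dotProduct_comm _ _
      rw [e0]
      simpa using hG₀.dotProduct_mulVec_nonneg v
    have hφzero : ∀ t ∈ Icc (0:ℝ) τ, φ t = 0 := fun t ht =>
      le_antisymm ((hφmono ht.2).trans_eq hφτ) (hφ0.trans (hφmono ht.1))
    have hwcont : Continuous w := continuous_iff_continuousAt.2 fun t => (hwd2 t).continuousAt
    have hψcont : Continuous fun t => w t ⬝ᵥ (A t *ᵥ w t) := by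
      have e3 : (fun t => w t ⬝ᵥ (A t *ᵥ w t))
          = fun t => ∑ i, w t i * ∑ k, A t i k * w t k := rfl
      rw [e3]
      apply continuous_finset_sum
      intro i _
      refine ((continuous_apply i).comp hwcont).mul ?_
      apply continuous_finset_sum
      intro k _
      exact (hA i k).mul ((continuous_apply k).comp hwcont)
    have hψ : ∀ t ∈ Icc (0:ℝ) τ, w t ⬝ᵥ (A t *ᵥ w t) = 0 := by
      have hIoo : ∀ t ∈ Ioo (0:ℝ) τ, w t ⬝ᵥ (A t *ᵥ w t) = 0 := by
        intro t ht
        have hloc : φ =ᶠ[nhds t] fun _ => 0 := by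
          filter_upwards [Icc_mem_nhds ht.1 ht.2] with s hs
          exact hφzero s hs
        have hcd : HasDerivAt φ 0 t :=
          (hasDerivAt_const t (0:ℝ)).congr_of_eventuallyEq hloc
        exact ((hφd t).unique hcd)
      have hclosure : Icc (0:ℝ) τ = closure (Ioo 0 τ) := (closure_Ioo hpos.ne).symm
      intro t ht
      rw [hclosure] at ht
      exact Set.EqOn.closure (fun s hs => hIoo s hs) hψcont
        (g := fun _ => (0:ℝ)) continuous_const ht
    have hAw : ∀ t ∈ Icc (0:ℝ) τ, A t *ᵥ w t = 0 := by
      intro t ht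
      exact (Matrix.PosSemidef.dotProduct_mulVec_zero_iff (hApsd t) (w t)).1
        (by simpa using hψ t ht)
    obtain ⟨K, hK⟩ := clamp_lipschitz M hM 0 τ hpos.le
    have hucont : Continuous u := continuous_iff_continuousAt.2 fun t => (hud t).continuousAt
    have huniq : EqOn u (fun _ => (0 : Fin n → ℝ)) (Icc 0 τ) := by
      apply ODE_solution_unique_of_mem_Icc_left
        (v := fun t x => M (max 0 (min τ t)) *ᵥ x) (s := fun _ => univ) (fun t _ => hK t)
        hucont.continuousOn
      · intro t ht
        have hcl : max (0:ℝ) (min τ t) = t := by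
          rw [min_eq_right ht.2, max_eq_right ht.1.le]
        rw [hcl]
        have := hud t
        rw [hAw t ⟨ht.1.le, ht.2⟩, add_zero] at this
        exact this.hasDerivWithinAt
      · exact fun t _ => mem_univ _
      · exact continuousOn_const
      · intro t ht
        rw [Matrix.mulVec_zero]
        exact (hasDerivWithinAt_const _ _ _)
      · exact fun t _ => mem_univ _
      · exact hv
    have h0 : u 0 = 0 := huniq ⟨le_refl _, hτ⟩
    rw [hudef] at h0
    simp only [hX0, Matrix.one_mulVec] at h0
    exact hv0 h0
  have hdet : ∀ τ, 0 ≤ τ → IsUnit (X τ).det := by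
    intro τ hτ
    by_contra h
    rw [isUnit_iff_ne_zero, not_not] at h
    obtain ⟨v, hv, hv0⟩ := (Matrix.exists_mulVec_eq_zero_iff).2 h
    exact hv (hker τ hτ v hv0)
  -- S := Xᵀ Y and its properties
  set S : ℝ → Matrix (Fin n) (Fin n) ℝ := fun t => (X t)ᵀ * Y t with hSdef
  have hS0 : S 0 = G₀ := by
    rw [hSdef]; simp only [hX0, hY0, Matrix.transpose_one, Matrix.one_mul]
  have hSD : ∀ τ, HasDerivAt S ((Y τ)ᵀ * A τ * Y τ) τ := by
    intro τ
    have h1 : HasDerivAt (fun t => (X t)ᵀ) ((M τ * X τ + A τ * Y τ)ᵀ) τ := by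
      rw [hasDerivAt_matrix]
      intro i j
      exact hasDerivAt_matrix.1 (hXD τ) j i
    have h2 := h1.mul (hYD τ)
    refine h2.congr_deriv (Eq.symm ?_)
    rw [Matrix.transpose_add, Matrix.transpose_mul, Matrix.transpose_mul, hAsymm]
    noncomm_ring
  -- monotonicity of quadratic forms of S
  have hSd : ∀ v : Fin n → ℝ, ∀ t, HasDerivAt (fun t => v ⬝ᵥ (S t *ᵥ v))
      ((Y t *ᵥ v) ⬝ᵥ (A t *ᵥ (Y t *ᵥ v))) t := by
    intro v t
    have h1 : HasDerivAt (fun t => ∑ i, v i * ∑ j, S t i j * v j)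
        (∑ i, v i * ∑ j, ((Y t)ᵀ * A t * Y t) i j * v j) t :=
      HasDerivAt.fun_sum fun i _ => ((HasDerivAt.fun_sum fun j _ =>
        ((hasDerivAt_matrix.1 (hSD t) i j).mul_const _))).const_mul _
    have e1 : (fun t : ℝ => ∑ i, v i * ∑ j, S t i j * v j) = fun t => v ⬝ᵥ (S t *ᵥ v) := by
      funext s; simp [dotProduct, Matrix.mulVec]
    have e2 : (∑ i, v i * ∑ j, ((Y t)ᵀ * A t * Y t) i j * v j)
        = (Y t *ᵥ v) ⬝ᵥ (A t *ᵥ (Y t *ᵥ v)) := by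
      have h3 : v ⬝ᵥ (((Y t)ᵀ * A t * Y t) *ᵥ v) = (Y t *ᵥ v) ⬝ᵥ (A t *ᵥ (Y t *ᵥ v)) := by
        rw [← Matrix.mulVec_mulVec, ← Matrix.mulVec_mulVec,
          dotProduct_mulVec, Matrix.vecMul_transpose]
      simpa [dotProduct, Matrix.mulVec] using h3
    rw [e1, e2] at h1
    exact h1
  have hmono : ∀ v : Fin n → ℝ, Monotone (fun t => v ⬝ᵥ (S t *ᵥ v)) := by
    intro v
    apply monotone_of_deriv_nonneg
    · exact fun t => (hSd v t).differentiableAt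
    · intro t
      rw [(hSd v t).deriv]
      simpa using (hApsd t).dotProduct_mulVec_nonneg (Y t *ᵥ v)
  have hYAYsymm : ∀ t, ((Y t)ᵀ * A t * Y t)ᵀ = (Y t)ᵀ * A t * Y t := by
    intro t
    rw [Matrix.transpose_mul, Matrix.transpose_mul, Matrix.transpose_transpose, hAsymm,
      Matrix.mul_assoc]
  have hSsymm : ∀ t, (S t)ᵀ = S t := by
    intro t
    ext i j
    have hdiff : Differentiable ℝ (fun s => S s i j - S s j i) := fun s =>
      ((hasDerivAt_matrix.1 (hSD s) i j).sub (hasDerivAt_matrix.1 (hSD s) j i)).differentiableAt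
    have hconst : S t i j - S t j i = S 0 i j - S 0 j i := by
      refine is_const_of_deriv_eq_zero hdiff (fun s => ?_) t 0
      have hd := (hasDerivAt_matrix.1 (hSD s) i j).sub (hasDerivAt_matrix.1 (hSD s) j i)
      refine hd.deriv.trans ?_
      have h4 : ((Y s)ᵀ * A s * Y s) j i = ((Y s)ᵀ * A s * Y s) i j := by
        conv_lhs => rw [← hYAYsymm s]
        rw [Matrix.transpose_apply]
      rw [h4]; ring
    rw [hS0] at hconst
    have hG := congrFun (congrFun hG₀symm i) j
    simp only [Matrix.transpose_apply] at hG ⊢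
    linarith
  set G : ℝ → Matrix (Fin n) (Fin n) ℝ := fun t => Y t * (X t)⁻¹ with hGdef
  have hG0 : G 0 = G₀ := by
    rw [hGdef]; simp only [hX0, hY0, inv_one, Matrix.mul_one]
  -- representation G = (X⁻¹)ᵀ S X⁻¹ and quadratic form bound
  have hrep : ∀ τ, 0 ≤ τ → G τ = ((X τ)⁻¹)ᵀ * S τ * (X τ)⁻¹ := by
    intro τ hτ
    have hXXi : X τ * (X τ)⁻¹ = 1 := Matrix.mul_nonsing_inv _ (hdet τ hτ)
    rw [hSdef, hGdef]
    calc Y τ * (X τ)⁻¹ = 1 * (Y τ * (X τ)⁻¹) := (Matrix.one_mul _).symm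
    _ = ((X τ)⁻¹)ᵀ * (X τ)ᵀ * (Y τ * (X τ)⁻¹) := by
        rw [← Matrix.transpose_mul, hXXi, Matrix.transpose_one]
    _ = ((X τ)⁻¹)ᵀ * ((X τ)ᵀ * Y τ) * (X τ)⁻¹ := by
        simp only [hSdef, Matrix.mul_assoc]
  have hquad : ∀ τ, 0 ≤ τ → ∀ v : Fin n → ℝ,
      v ⬝ᵥ (G τ *ᵥ v) = ((X τ)⁻¹ *ᵥ v) ⬝ᵥ (S τ *ᵥ ((X τ)⁻¹ *ᵥ v)) := by
    intro τ hτ v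
    rw [hrep τ hτ]
    rw [← Matrix.mulVec_mulVec, ← Matrix.mulVec_mulVec]
    rw [dotProduct_mulVec, Matrix.vecMul_transpose]
  have hquadG₀ : ∀ τ, 0 ≤ τ → ∀ v : Fin n → ℝ,
      ((X τ)⁻¹ *ᵥ v) ⬝ᵥ (G₀ *ᵥ ((X τ)⁻¹ *ᵥ v)) ≤ v ⬝ᵥ (G τ *ᵥ v) := by
    intro τ hτ v
    rw [hquad τ hτ v]
    have h := hmono ((X τ)⁻¹ *ᵥ v) hτ
    simp only [hS0] at h
    exact h
  -- final assembly
  refine ⟨G, hG0, ?_, ?_, ?_⟩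
  · intro τ hτ
    have hdetτ := hdet τ hτ
    have hXinv := hasDerivAt_matrix_inv hdetτ (hXD τ)
    have hGD := (hYD τ).mul hXinv
    have hXXi : X τ * (X τ)⁻¹ = 1 := Matrix.mul_nonsing_inv _ hdetτ
    have h1 : (M τ * X τ + A τ * Y τ) * (X τ)⁻¹ = M τ + A τ * (Y τ * (X τ)⁻¹) := by
      rw [Matrix.add_mul, Matrix.mul_assoc, hXXi, Matrix.mul_one, Matrix.mul_assoc]
    have hval : -(M τ)ᵀ * Y τ * (X τ)⁻¹ +
        Y τ * -((X τ)⁻¹ * (M τ * X τ + A τ * Y τ) * (X τ)⁻¹)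
        = -(M τ)ᵀ * G τ - G τ * M τ - G τ * A τ * G τ := by
      simp only [hGdef]
      rw [Matrix.mul_assoc ((X τ)⁻¹) (M τ * X τ + A τ * Y τ) ((X τ)⁻¹), h1]
      noncomm_ring
    rw [hval] at hGD
    intro i j
    exact hasDerivAt_matrix.1 hGD i j
  · intro τ hτ
    have hGsymmτ : (G τ)ᵀ = G τ := by
      rw [hrep τ hτ, Matrix.transpose_mul, Matrix.transpose_mul, Matrix.transpose_transpose,
        hSsymm, Matrix.mul_assoc]
      simp only [hSdef, Matrix.mul_assoc]
    refine Matrix.PosSemidef.of_dotProduct_mulVec_nonneg ?_ ?_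
    · show (G τ)ᴴ = G τ
      rw [creal]; exact hGsymmτ
    · intro v
      rw [star_trivial]
      calc (0:ℝ) ≤ ((X τ)⁻¹ *ᵥ v) ⬝ᵥ (G₀ *ᵥ ((X τ)⁻¹ *ᵥ v)) := by
            simpa using hG₀.dotProduct_mulVec_nonneg ((X τ)⁻¹ *ᵥ v)
      _ ≤ v ⬝ᵥ (G τ *ᵥ v) := hquadG₀ τ hτ v
  · intro hG₀pd τ hτ
    have hGsymmτ : (G τ)ᵀ = G τ := by
      rw [hrep τ hτ, Matrix.transpose_mul, Matrix.transpose_mul, Matrix.transpose_transpose,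
        hSsymm, Matrix.mul_assoc]
      simp only [hSdef, Matrix.mul_assoc]
    refine Matrix.PosDef.of_dotProduct_mulVec_pos ?_ ?_
    · show (G τ)ᴴ = G τ
      rw [creal]; exact hGsymmτ
    · intro v hv
      rw [star_trivial]
      have hXXi : X τ * (X τ)⁻¹ = 1 := Matrix.mul_nonsing_inv _ (hdet τ hτ)
      have hz : (X τ)⁻¹ *ᵥ v ≠ 0 := by
        intro h0
        apply hv
        have h5 : X τ *ᵥ ((X τ)⁻¹ *ᵥ v) = v := by
          rw [Matrix.mulVec_mulVec, hXXi, Matrix.one_mulVec]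
        rw [h0, Matrix.mulVec_zero] at h5
        exact h5.symm
      calc (0:ℝ) < ((X τ)⁻¹ *ᵥ v) ⬝ᵥ (G₀ *ᵥ ((X τ)⁻¹ *ᵥ v)) := by
            simpa using hG₀pd.dotProduct_mulVec_pos hz
      _ ≤ v ⬝ᵥ (G τ *ᵥ v) := hquadG₀ τ hτ v

end MatDeriv

end RiccatiAux

open Matrix

/-- For continuous coefficients `M, A` with each `A τ` symmetric positive
semidefinite and a symmetric positive semidefinite initial value `G₀`, the solution of the
Riccati matrix ODE `Ġ = -Mᵀ G - G M - G A G`, `G 0 = G₀` exists for all `τ ≥ 0` and stays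
positive semidefinite; it stays positive definite if `G₀` is positive definite. -/
theorem stmt_0 (n : ℕ) (M A : ℝ → Matrix (Fin n) (Fin n) ℝ)
    (hM : ∀ i j, Continuous fun τ => M τ i j)
    (hA : ∀ i j, Continuous fun τ => A τ i j)
    (hApsd : ∀ τ, (A τ).PosSemidef)
    (G₀ : Matrix (Fin n) (Fin n) ℝ) (hG₀ : G₀.PosSemidef) :
    ∃ G : ℝ → Matrix (Fin n) (Fin n) ℝ,
      G 0 = G₀ ∧
      (∀ τ, 0 ≤ τ → ∀ i j, HasDerivAt (fun t => G t i j)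
        ((-(M τ)ᵀ * G τ - G τ * M τ - G τ * A τ * G τ) i j) τ) ∧
      (∀ τ, 0 ≤ τ → (G τ).PosSemidef) ∧
      (G₀.PosDef → ∀ τ, 0 ≤ τ → (G τ).PosDef) :=
  RiccatiAux.stmt_0' M A hM hA hApsd G₀ hG₀
end

section
/- Let M, A : ℝ → Mat(n×n, ℝ) be continuous and T-periodic with each A(τ) symmetric positive semidefinite, and let G : ℝ → Mat(n×n, ℝ) be a T-periodic symmetric solution of the PRDE Ġ(τ) = −M(τ)ᵀG(τ) − G(τ)M(τ) − G(τ)A(τ)G(τ). Then G(τ) is positive definite (respectively positive semidefinite) for all τ if and only if G(τ₀) is positive definite (respectively positive semidefinite) for some τ₀ ∈ [0, T). -/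
open Matrix

section PRDEproofAux
open Set

section PRDEaux

lemma prde_mulVec_norm_le (n : ℕ) (B : Matrix (Fin n) (Fin n) ℝ) (w : Fin n → ℝ) :
    ‖B *ᵥ w‖ ≤ (∑ i, ∑ j, |B i j|) * ‖w‖ := by
  rw [show ((∑ i, ∑ j, |B i j|) * ‖w‖ : ℝ) = ‖w‖ * (∑ i, ∑ j, |B i j|) by ring] at *
  apply pi_norm_le_iff_of_nonneg (by positivity) |>.2
  intro i
  calc ‖(B *ᵥ w) i‖ = |∑ j, B i j * w j| := by rfl
    _ ≤ ∑ j, |B i j * w j| := Finset.abs_sum_le_sum_abs _ _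
    _ ≤ ∑ j, |B i j| * ‖w‖ := by
        apply Finset.sum_le_sum; intro j _
        rw [abs_mul]
        exact mul_le_mul_of_nonneg_left (norm_le_pi_norm w j) (abs_nonneg _)
    _ = (∑ j, |B i j|) * ‖w‖ := by rw [Finset.sum_mul]
    _ ≤ (∑ i, ∑ j, |B i j|) * ‖w‖ := by
        apply mul_le_mul_of_nonneg_right _ (norm_nonneg _)
        exact Finset.single_le_sum (f := fun i => ∑ j, |B i j|)
          (fun i _ => Finset.sum_nonneg fun j _ => abs_nonneg _) (Finset.mem_univ i)
    _ = ‖w‖ * (∑ i, ∑ j, |B i j|) := by ring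

/-- Existence of a uniform Lipschitz constant on a compact interval. -/
lemma prde_exists_lip (n : ℕ) (B : ℝ → Matrix (Fin n) (Fin n) ℝ)
    (hB : ∀ i j, Continuous fun t => B t i j) (lo hi : ℝ) :
    ∃ K : NNReal, ∀ t ∈ Icc lo hi, LipschitzWith K (fun x => B t *ᵥ x) := by
  have hc : ContinuousOn (fun t => ∑ i, ∑ j, |B t i j|) (Icc lo hi) := by
    apply Continuous.continuousOn
    exact continuous_finset_sum _ fun i _ => continuous_finset_sum _ fun j _ => (hB i j).abs
  obtain ⟨C, hC⟩ := (isCompact_Icc (a := lo) (b := hi)).exists_bound_of_continuousOn hc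
  refine ⟨⟨max C 0, le_max_right _ _⟩, fun t ht => ?_⟩
  apply LipschitzWith.of_dist_le_mul
  intro x y
  have h1 : dist (B t *ᵥ x) (B t *ᵥ y) = ‖B t *ᵥ (x - y)‖ := by
    rw [dist_eq_norm, ← Matrix.mulVec_sub]
  rw [h1, dist_eq_norm]
  calc ‖B t *ᵥ (x - y)‖ ≤ (∑ i, ∑ j, |B t i j|) * ‖x - y‖ := prde_mulVec_norm_le n _ _
    _ ≤ max C 0 * ‖x - y‖ := by
        apply mul_le_mul_of_nonneg_right _ (norm_nonneg _)
        exact le_trans (le_abs_self _) (le_trans (hC t ht) (le_max_left _ _))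

/-- Local existence with prescribed value at the right endpoint. -/
lemma prde_local_exists (n : ℕ) (B : ℝ → Matrix (Fin n) (Fin n) ℝ)
    (hB : ∀ i j, Continuous fun t => B t i j)
    (K : NNReal) (lo hi : ℝ)
    (hK : ∀ t ∈ Icc lo hi, LipschitzWith K (fun x => B t *ᵥ x))
    (a b : ℝ) (hab : a ≤ b) (hsub : Icc a b ⊆ Icc lo hi)
    (hδ : b - a ≤ 1 / (2 * K + 2)) (w : Fin n → ℝ) :
    ∃ x : ℝ → (Fin n → ℝ), x b = w ∧
      ∀ t ∈ Icc a b, HasDerivWithinAt x (B t *ᵥ x t) (Icc a b) t := by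
  have hpl : IsPicardLindelof (fun t x => B t *ᵥ x) (tmin := a) (tmax := b) ⟨b, hab, le_refl b⟩ w
      (‖w‖₊ + 1) 0 (K * (2 * ‖w‖₊ + 1)) K := by
    constructor
    · exact fun t ht => (hK t (hsub ht)).lipschitzOnWith
    · intro x _
      apply Continuous.continuousOn
      apply continuous_pi
      intro i
      simp only [Matrix.mulVec, dotProduct]
      exact continuous_finset_sum _ fun j _ => ((hB i j).mul continuous_const)
    · intro t ht x hx
      push_cast
      have h0 : B t *ᵥ (0 : Fin n → ℝ) = 0 := Matrix.mulVec_zero _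
      have := (hK t (hsub ht)).dist_le_mul x 0
      rw [h0, dist_zero_right, dist_zero_right] at this
      calc ‖B t *ᵥ x‖ ≤ K * ‖x‖ := this
        _ ≤ (K : ℝ) * (2 * ‖w‖ + 1) := by
            apply mul_le_mul_of_nonneg_left _ (NNReal.coe_nonneg K)
            have : ‖x - w‖ ≤ ‖w‖ + 1 := by
              have hx' := Metric.mem_closedBall.1 hx
              push_cast at hx'
              rw [← dist_eq_norm]; exact hx'
            calc ‖x‖ = ‖x - w + w‖ := by ring_nf
              _ ≤ ‖x - w‖ + ‖w‖ := norm_add_le _ _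
              _ ≤ 2 * ‖w‖ + 1 := by linarith
    · simp only [tsub_zero, sub_zero, NNReal.coe_zero]
      push_cast
      show (K : ℝ) * (2 * ‖w‖ + 1) * max (b - b) (b - a) ≤ ‖w‖ + 1
      have hmax : max (b - b) (b - a) = b - a := by
        rw [sub_self]; exact max_eq_right (by linarith)
      rw [hmax]
      have hK0 : (0:ℝ) ≤ K := NNReal.coe_nonneg K
      have hw0 : (0:ℝ) ≤ ‖w‖ := norm_nonneg w
      have h2 : (0:ℝ) < 2 * K + 2 := by linarith
      calc (K : ℝ) * (2 * ‖w‖ + 1) * (b - a) ≤ (K:ℝ) * (2 * ‖w‖ + 1) * (1 / (2*K+2)) := by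
            apply mul_le_mul_of_nonneg_left hδ (by positivity)
        _ ≤ ‖w‖ + 1 := by
            rw [div_eq_inv_mul, mul_one, ← div_eq_mul_inv, div_le_iff₀ h2]
            nlinarith
  obtain ⟨x, hx0, hx⟩ := hpl.exists_eq_forall_mem_Icc_hasDerivWithinAt₀
  exact ⟨x, hx0, hx⟩

section
variable (n : ℕ) (B : ℝ → Matrix (Fin n) (Fin n) ℝ)

/-- Global existence on `Icc s t` with prescribed value at the right endpoint. -/
lemma prde_global_exists
    (hB : ∀ i j, Continuous fun t => B t i j)
    (K : NNReal) (s t : ℝ) (hst : s ≤ t)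
    (hK : ∀ τ ∈ Icc s t, LipschitzWith K (fun x => B τ *ᵥ x))
    (loc : ∀ a b : ℝ, a ≤ b → Icc a b ⊆ Icc s t → b - a ≤ 1 / (2 * K + 2) →
      ∀ w : Fin n → ℝ, ∃ x : ℝ → (Fin n → ℝ), x b = w ∧
        ∀ τ ∈ Icc a b, HasDerivWithinAt x (B τ *ᵥ x τ) (Icc a b) τ)
    (v : Fin n → ℝ) :
    ∃ x : ℝ → (Fin n → ℝ), x t = v ∧
      ∀ τ ∈ Icc s t, HasDerivWithinAt x (B τ *ᵥ x τ) (Icc s t) τ := by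
  set δ : ℝ := 1 / (2 * K + 2) with hδdef
  have hδpos : 0 < δ := by positivity
  -- solutions on shrinking left endpoints
  have key : ∀ k : ℕ, ∃ x : ℝ → (Fin n → ℝ), x t = v ∧
      ∀ τ ∈ Icc (max s (t - k * δ)) t,
        HasDerivWithinAt x (B τ *ᵥ x τ) (Icc (max s (t - k * δ)) t) τ := by
    intro k
    induction k with
    | zero =>
      refine ⟨fun _ => v, rfl, fun τ hτ => ?_⟩
      simp only [Nat.cast_zero, zero_mul, sub_zero, max_eq_right hst] at hτ ⊢
      have : τ = t := le_antisymm hτ.2 hτ.1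
      subst this
      rw [Icc_self]
      apply hasDerivWithinAt_iff_hasFDerivWithinAt.2
      rw [← hasFDerivWithinAt_diff_singleton τ, Set.diff_self]
      exact HasFDerivWithinAt.of_notMem_closure (by simp)
    | succ k ih =>
      obtain ⟨x, hxt, hx⟩ := ih
      set a : ℝ := max s (t - k * δ) with ha
      set a' : ℝ := max s (t - (k + 1 : ℕ) * δ) with ha'
      have haa' : a' ≤ a := by
        apply max_le (le_max_left _ _)
        refine le_trans ?_ (le_max_right _ _)
        push_cast; nlinarith
      have hat : a ≤ t := max_le hst (by nlinarith [Nat.cast_nonneg (α := ℝ) k])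
      have hsa : s ≤ a' := le_max_left _ _
      rcases eq_or_lt_of_le haa' with heq | hlt
      · refine ⟨x, hxt, ?_⟩
        rw [heq]
        exact hx
      -- a' < a; in particular t - k δ > s, so a = t - k δ
      have haval : a = t - k * δ := by
        rcases max_cases s (t - k * δ) with ⟨h1, h2⟩ | ⟨h1, h2⟩
        · exfalso
          have : a' = s := by
            rw [ha']; apply max_eq_left
            refine le_trans ?_ h2
            push_cast; nlinarith
          rw [← ha] at h1; rw [this] at hlt; rw [h1] at hlt; exact lt_irrefl _ hlt
        · rw [ha]; exact max_eq_right h2.le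
      have hd : a - a' ≤ δ := by
        have : t - (k+1:ℕ) * δ ≤ a' := le_max_right _ _
        push_cast at this ⊢; nlinarith
      obtain ⟨y, hya, hy⟩ := loc a' a haa'
        (fun τ hτ => ⟨le_trans hsa hτ.1, le_trans hτ.2 hat⟩) (by linarith) (x a)
      refine ⟨fun τ => if a ≤ τ then x τ else y τ, by simp [hat, hxt], fun τ hτ => ?_⟩
      set z : ℝ → (Fin n → ℝ) := fun τ => if a ≤ τ then x τ else y τ with hz
      have hzx : EqOn z x (Icc a t) := fun τ hτ => by simp [hz, hτ.1]
      have hzy : EqOn z y (Icc a' a) := fun τ hτ => by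
        rcases lt_or_ge τ a with h | h
        · simp [hz, not_le.2 h]
        · have : τ = a := le_antisymm hτ.2 h
          subst this; simp [hz, hya]
      have hicc : Icc a' a ∪ Icc a t = Icc a' t := Icc_union_Icc_eq_Icc haa' hat
      rw [← hicc] at hτ ⊢
      have h1 : HasDerivWithinAt z (B τ *ᵥ z τ) (Icc a' a) τ := by
        rcases lt_or_ge a τ with h | h
        · exact HasFDerivWithinAt.of_notMem_closure (by
            rw [closure_Icc]; intro hc; exact absurd hc.2 (not_le.2 h))
        · have hτ' : τ ∈ Icc a' a := by
            rcases hτ with hc | hc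
            · exact hc
            · exact ⟨le_trans haa' hc.1, h⟩
          rw [show z τ = y τ from hzy hτ']
          exact (hy τ hτ').congr (fun u hu => hzy hu) (hzy hτ')
      have h2 : HasDerivWithinAt z (B τ *ᵥ z τ) (Icc a t) τ := by
        rcases lt_or_ge τ a with h | h
        · exact HasFDerivWithinAt.of_notMem_closure (by
            rw [closure_Icc]; intro hc; exact absurd hc.1 (not_le.2 h))
        · have hτ' : τ ∈ Icc a t := by
            rcases hτ with hc | hc
            · exact ⟨h, le_trans hc.2 hat⟩
            · exact hc
          rw [show z τ = x τ from hzx hτ']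
          exact (hx τ hτ').congr (fun u hu => hzx hu) (hzx hτ')
      exact h1.union h2
  -- choose k large enough
  obtain ⟨k, hk⟩ := exists_nat_ge ((t - s) / δ)
  obtain ⟨x, hxt, hx⟩ := key k
  have hmax : max s (t - k * δ) = s := by
    apply max_eq_left
    rw [div_le_iff₀ hδpos] at hk
    linarith
  rw [hmax] at hx
  exact ⟨x, hxt, hx⟩
end

-- sum-shaped algebra lemma
lemma prde_alg_sum (n : ℕ) (Mm Aa Gg : Matrix (Fin n) (Fin n) ℝ) (hG : Ggᵀ = Gg) (hA : Aaᵀ = Aa)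
    (x : Fin n → ℝ) :
    ∑ i, (((Mm + Aa * Gg) *ᵥ x) i * (Gg *ᵥ x) i
      + x i * (∑ j, ((-Mmᵀ * Gg - Gg * Mm - Gg * Aa * Gg) i j * x j
          + Gg i j * ((Mm + Aa * Gg) *ᵥ x) j)))
    = (Gg *ᵥ x) ⬝ᵥ (Aa *ᵥ (Gg *ᵥ x)) := by
  have h1 : ∀ B C : Matrix (Fin n) (Fin n) ℝ, (B *ᵥ x) ⬝ᵥ (C *ᵥ x) = x ⬝ᵥ ((Bᵀ * C) *ᵥ x) := by
    intro B C
    rw [Matrix.dotProduct_mulVec, ← Matrix.mulVec_transpose, Matrix.mulVec_mulVec,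
      Matrix.dotProduct_mulVec, ← Matrix.mulVec_transpose, Matrix.transpose_mul,
      Matrix.transpose_transpose]
  have expand : ∑ i, (((Mm + Aa * Gg) *ᵥ x) i * (Gg *ᵥ x) i
      + x i * (∑ j, ((-Mmᵀ * Gg - Gg * Mm - Gg * Aa * Gg) i j * x j
          + Gg i j * ((Mm + Aa * Gg) *ᵥ x) j)))
      = ((Mm + Aa * Gg) *ᵥ x) ⬝ᵥ (Gg *ᵥ x)
        + x ⬝ᵥ ((-Mmᵀ * Gg - Gg * Mm - Gg * Aa * Gg) *ᵥ x)
        + x ⬝ᵥ (Gg *ᵥ ((Mm + Aa * Gg) *ᵥ x)) := by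
    simp only [Matrix.mulVec, dotProduct, mul_add, Finset.sum_add_distrib, add_assoc]
  rw [expand, h1, Matrix.mulVec_mulVec, ← dotProduct_add, ← dotProduct_add,
    ← Matrix.add_mulVec, ← Matrix.add_mulVec]
  have h2 : (Mm + Aa * Gg)ᵀ * Gg + (-Mmᵀ * Gg - Gg * Mm - Gg * Aa * Gg) + Gg * (Mm + Aa * Gg)
      = Gg * (Aa * Gg) := by
    rw [Matrix.transpose_add, Matrix.transpose_mul, hG, hA]
    noncomm_ring
  rw [h2, ← Matrix.mulVec_mulVec, Matrix.dotProduct_mulVec, ← Matrix.mulVec_transpose, hG,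
    Matrix.mulVec_mulVec]

end PRDEaux

/-- Core propagation: quadratic form of `G` along the flow. -/
lemma prde_key (n : ℕ) (M A G : ℝ → Matrix (Fin n) (Fin n) ℝ)
    (hM : ∀ i j, Continuous fun τ => M τ i j)
    (hA : ∀ i j, Continuous fun τ => A τ i j)
    (hApsd : ∀ τ, (A τ).PosSemidef)
    (hGsymm : ∀ τ, (G τ).IsSymm)
    (hGode : ∀ τ, ∀ i j, HasDerivAt (fun t => G t i j)
        ((-(M τ)ᵀ * G τ - G τ * M τ - G τ * A τ * G τ) i j) τ)
    (s t : ℝ) (hst : s ≤ t) (v : Fin n → ℝ) :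
    ∃ w : Fin n → ℝ, (w ⬝ᵥ (G s *ᵥ w) ≤ v ⬝ᵥ (G t *ᵥ v)) ∧ (v ≠ 0 → w ≠ 0) := by
  classical
  have hGcont : ∀ i j, Continuous fun τ => G τ i j := fun i j => by
    rw [continuous_iff_continuousAt]
    exact fun τ => (hGode τ i j).continuousAt
  set B : ℝ → Matrix (Fin n) (Fin n) ℝ := fun τ => M τ + A τ * G τ with hBdef
  have hBcont : ∀ i j, Continuous fun τ => B τ i j := by
    intro i j
    simp only [hBdef, Matrix.add_apply, Matrix.mul_apply]
    exact (hM i j).add (continuous_finset_sum _ fun k _ => (hA i k).mul (hGcont k j))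
  -- clamped coefficient matrix
  set c : ℝ → ℝ := fun τ => max s (min t τ) with hcdef
  have hc_cont : Continuous c := continuous_const.max (continuous_const.min continuous_id)
  have hc_mem : ∀ τ, c τ ∈ Icc s t := fun τ =>
    ⟨le_max_left _ _, max_le hst (min_le_left _ _)⟩
  have hc_eq : ∀ τ ∈ Icc s t, c τ = τ := fun τ hτ => by
    simp only [hcdef]
    rw [min_eq_right hτ.2, max_eq_right hτ.1]
  set Bc : ℝ → Matrix (Fin n) (Fin n) ℝ := fun τ => B (c τ) with hBcdef
  have hBc_cont : ∀ i j, Continuous fun τ => Bc τ i j := fun i j =>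
    (hBcont i j).comp hc_cont
  obtain ⟨K, hK⟩ := prde_exists_lip n B hBcont s t
  have hKall : ∀ τ, LipschitzWith K (fun x => Bc τ *ᵥ x) := fun τ => hK (c τ) (hc_mem τ)
  have hKc : ∀ τ ∈ Icc s t, LipschitzWith K (fun x => Bc τ *ᵥ x) := fun τ _ => hKall τ
  obtain ⟨x, hxt, hxd⟩ := prde_global_exists n Bc hBc_cont K s t hst hKc
    (fun a b hab hsub hlen w => prde_local_exists n Bc hBc_cont K s t hKc a b hab hsub hlen w) v
  have hxd' : ∀ τ ∈ Icc s t, HasDerivWithinAt x (B τ *ᵥ x τ) (Icc s t) τ := fun τ hτ => by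
    have := hxd τ hτ
    rwa [show Bc τ = B τ from by show B (c τ) = B τ; rw [hc_eq τ hτ]] at this
  -- the quadratic form along the solution
  set φ : ℝ → ℝ := fun u => ∑ i, x u i * ∑ j, G u i j * x u j with hφdef
  set ψ : ℝ → ℝ := fun τ => (G τ *ᵥ x τ) ⬝ᵥ (A τ *ᵥ (G τ *ᵥ x τ)) with hψdef
  have hφd : ∀ τ ∈ Icc s t, HasDerivWithinAt φ (ψ τ) (Icc s t) τ := by
    intro τ hτ
    have hxi : ∀ i, HasDerivWithinAt (fun u => x u i) ((B τ *ᵥ x τ) i) (Icc s t) τ :=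
      fun i => (hasDerivWithinAt_pi.1 (hxd' τ hτ)) i
    have hsum : HasDerivWithinAt φ
        (∑ i, (((B τ) *ᵥ x τ) i * ∑ j, G τ i j * x τ j
          + x τ i * ∑ j, ((-(M τ)ᵀ * G τ - G τ * M τ - G τ * A τ * G τ) i j * x τ j
              + G τ i j * ((B τ) *ᵥ x τ) j))) (Icc s t) τ := by
      apply HasDerivWithinAt.fun_sum
      intro i _
      exact (hxi i).mul <| HasDerivWithinAt.fun_sum fun j _ =>
        ((hGode τ i j).hasDerivWithinAt).mul (hxi j)
    have halg := prde_alg_sum n (M τ) (A τ) (G τ) (hGsymm τ)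
      (by have := (hApsd τ).1
          rw [Matrix.IsHermitian] at this
          rwa [← Matrix.conjTranspose_eq_transpose_of_trivial]) (x τ)
    convert hsum using 1
    show (G τ *ᵥ x τ) ⬝ᵥ (A τ *ᵥ (G τ *ᵥ x τ)) = _
    rw [← halg]
    rfl
  have hψ0 : ∀ τ, 0 ≤ ψ τ := fun τ => by
    have := (posSemidef_iff_dotProduct_mulVec.mp (hApsd τ)).2 (G τ *ᵥ x τ)
    simpa [hψdef] using this
  -- monotonicity of φ
  have hφmono : MonotoneOn φ (Icc s t) := by
    apply monotoneOn_of_deriv_nonneg (convex_Icc s t)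
      (fun τ hτ => (hφd τ hτ).continuousWithinAt)
    · intro τ hτ
      rw [interior_Icc] at hτ
      exact (((hφd τ (Ioo_subset_Icc_self hτ)).hasDerivAt
        (Icc_mem_nhds hτ.1 hτ.2)).differentiableAt).differentiableWithinAt
    · intro τ hτ
      rw [interior_Icc] at hτ
      rw [((hφd τ (Ioo_subset_Icc_self hτ)).hasDerivAt (Icc_mem_nhds hτ.1 hτ.2)).deriv]
      exact hψ0 τ
  have hφst : φ s ≤ φ t := hφmono (left_mem_Icc.2 hst) (right_mem_Icc.2 hst) hst
  have hφt : φ t = v ⬝ᵥ (G t *ᵥ v) := by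
    simp only [hφdef, hxt, dotProduct, Matrix.mulVec]
  have hφs : φ s = x s ⬝ᵥ (G s *ᵥ x s) := by
    simp only [hφdef, dotProduct, Matrix.mulVec]
  refine ⟨x s, by rw [← hφs, ← hφt]; exact hφst, ?_⟩
  -- nonvanishing via uniqueness
  intro hv hxs0
  apply hv
  rcases eq_or_lt_of_le hst with heq | hlt
  · rw [← hxt, ← heq, hxs0]
  have huniq : EqOn x (fun _ => (0 : Fin n → ℝ)) (Icc s t) := by
    apply ODE_solution_unique_of_mem_Icc_right
      (v := fun τ y => Bc τ *ᵥ y) (s := fun _ => (univ : Set (Fin n → ℝ))) (K := K)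
      (fun τ _ => (hKall τ).lipschitzOnWith)
      (fun τ hτ => (hxd τ hτ).continuousWithinAt)
      (fun τ hτ => (hxd τ (Ico_subset_Icc_self hτ)).mono_of_mem_nhdsWithin (Icc_mem_nhdsGE_of_mem hτ))
      (fun τ _ => mem_univ _)
      continuousOn_const
      (fun τ hτ => by
        have h0 : Bc τ *ᵥ (0 : Fin n → ℝ) = 0 := Matrix.mulVec_zero _
        show HasDerivWithinAt (fun _ => (0 : Fin n → ℝ)) (Bc τ *ᵥ (0:Fin n → ℝ)) (Ici τ) τ
        rw [h0]
        exact hasDerivWithinAt_const τ _ 0)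
      (fun τ _ => mem_univ _)
      hxs0
  rw [← hxt]
  exact huniq (right_mem_Icc.2 hst)

lemma prde_per_nat (T : ℝ) {n : ℕ} (G : ℝ → Matrix (Fin n) (Fin n) ℝ)
    (hGper : ∀ τ, G (τ + T) = G τ) : ∀ (τ : ℝ) (k : ℕ), G (τ + k * T) = G τ := by
  intro τ k
  induction k with
  | zero => simp
  | succ k ih =>
    have : τ + (k + 1 : ℕ) * T = (τ + k * T) + T := by push_cast; ring
    rw [this, hGper, ih]


end PRDEproofAux

open Set in
/-- A `T`-periodic symmetric solution of the periodic Riccati differential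
equation is positive definite (resp. positive semidefinite) for all `τ` iff it is positive
definite (resp. positive semidefinite) at some `τ₀ ∈ [0, T)`. -/
theorem stmt_1 (n : ℕ) (T : ℝ) (hT : 0 < T)
    (M A : ℝ → Matrix (Fin n) (Fin n) ℝ)
    (hM : ∀ i j, Continuous fun τ => M τ i j)
    (hMper : ∀ τ, M (τ + T) = M τ)
    (hA : ∀ i j, Continuous fun τ => A τ i j)
    (hAper : ∀ τ, A (τ + T) = A τ)
    (hApsd : ∀ τ, (A τ).PosSemidef)
    (G : ℝ → Matrix (Fin n) (Fin n) ℝ)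
    (hGper : ∀ τ, G (τ + T) = G τ)
    (hGsymm : ∀ τ, (G τ).IsSymm)
    (hGode : ∀ τ, ∀ i j, HasDerivAt (fun t => G t i j)
        ((-(M τ)ᵀ * G τ - G τ * M τ - G τ * A τ * G τ) i j) τ) :
    ((∀ τ, (G τ).PosDef) ↔ ∃ τ₀ ∈ Set.Ico (0:ℝ) T, (G τ₀).PosDef) ∧
    ((∀ τ, (G τ).PosSemidef) ↔ ∃ τ₀ ∈ Set.Ico (0:ℝ) T, (G τ₀).PosSemidef) := by
  have hherm : ∀ τ, (G τ).IsHermitian := by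
    intro τ
    rw [Matrix.IsHermitian, Matrix.conjTranspose_eq_transpose_of_trivial]
    exact hGsymm τ
  -- propagation to arbitrary τ from τ₀
  have main : ∀ τ₀ τ : ℝ, ∀ v : Fin n → ℝ,
      ∃ w : Fin n → ℝ, (w ⬝ᵥ (G τ₀ *ᵥ w) ≤ v ⬝ᵥ (G τ *ᵥ v)) ∧ (v ≠ 0 → w ≠ 0) := by
    intro τ₀ τ v
    obtain ⟨k, hk⟩ := exists_nat_ge ((τ₀ - τ) / T)
    have hle : τ₀ ≤ τ + k * T := by
      rw [div_le_iff₀ hT] at hk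
      linarith
    obtain ⟨w, hw, hw0⟩ := prde_key n M A G hM hA hApsd hGsymm hGode τ₀ (τ + k * T) hle v
    rw [prde_per_nat T G hGper τ k] at hw
    exact ⟨w, hw, hw0⟩
  constructor
  · constructor
    · intro h
      exact ⟨0, ⟨le_refl 0, hT⟩, h 0⟩
    · rintro ⟨τ₀, _, hpd⟩ τ
      refine posDef_iff_dotProduct_mulVec.mpr ⟨hherm τ, fun v hv => ?_⟩
      obtain ⟨w, hw, hw0⟩ := main τ₀ τ v
      have h1 : 0 < w ⬝ᵥ (G τ₀ *ᵥ w) := by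
        have := (posDef_iff_dotProduct_mulVec.mp hpd).2 (hw0 hv)
        simpa using this
      have : 0 < v ⬝ᵥ (G τ *ᵥ v) := lt_of_lt_of_le h1 hw
      simpa using this
  · constructor
    · intro h
      exact ⟨0, ⟨le_refl 0, hT⟩, h 0⟩
    · rintro ⟨τ₀, _, hpsd⟩ τ
      refine posSemidef_iff_dotProduct_mulVec.mpr ⟨hherm τ, fun v => ?_⟩
      obtain ⟨w, hw, _⟩ := main τ₀ τ v
      have h1 : 0 ≤ w ⬝ᵥ (G τ₀ *ᵥ w) := by
        have := (posSemidef_iff_dotProduct_mulVec.mp hpsd).2 w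
        simpa using this
      have : 0 ≤ v ⬝ᵥ (G τ *ᵥ v) := le_trans h1 hw
      simpa using this
end

section
/- Let M : ℝ → Mat(n×n, ℝ) and N : ℝ → Mat(n×m, ℝ) be continuous T-periodic matrix-valued functions, let τ₀ ∈ [0,T), and let D(τ₀) be any real matrix such that D(τ₀)D(τ₀)ᵀ = ∫_{τ₀}^{τ₀+T} Φ_M(τ₀+T, s) N(s) N(s)ᵀ Φ_M(τ₀+T, s)ᵀ ds. Then the pair (M(·), N(·)) is controllable if and only if the time-invariant constant-matrix pair (Φ̄_M(τ₀), D(τ₀)) is controllable. -/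
open Matrix intervalIntegral

/-- A pair `(M(·), N(·))` of `T`-periodic matrix functions is controllable if no nonzero
complex left eigenvector `u` of the monodromy matrix `Φ_M(T,0)` satisfies
`u ⬝ Φ_M(τ,0)⁻¹ N(τ) = 0` for all `τ ∈ [0,T]`.  Here `Φ` denotes `τ ↦ Φ_M(τ,0)`. -/
def PerControllable {n m : ℕ} (T : ℝ) (Φ : ℝ → Matrix (Fin n) (Fin n) ℝ)
    (N : ℝ → Matrix (Fin n) (Fin m) ℝ) : Prop :=
  ¬ ∃ (u : Fin n → ℂ) (μ : ℂ), u ≠ 0 ∧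
      u ᵥ* (Φ T).map Complex.ofReal = μ • u ∧
      ∀ τ ∈ Set.Icc (0:ℝ) T,
        u ᵥ* ((Φ τ)⁻¹.map Complex.ofReal * (N τ).map Complex.ofReal) = 0

/-- A pair `(F, D)` of constant real matrices is controllable if no nonzero complex left
eigenvector `u` of `F` satisfies `u·D = 0`. -/
def CtrlPair {n k : ℕ} (F : Matrix (Fin n) (Fin n) ℝ) (D : Matrix (Fin n) (Fin k) ℝ) : Prop :=
  ¬ ∃ (u : Fin n → ℂ) (μ : ℂ), u ≠ 0 ∧
      u ᵥ* F.map Complex.ofReal = μ • u ∧ u ᵥ* D.map Complex.ofReal = 0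



open Matrix intervalIntegral MeasureTheory Set

namespace Stmt6Aux

abbrev toPi {n : ℕ} (A : Matrix (Fin n) (Fin n) ℝ) : Fin n → Fin n → ℝ := Matrix.of.symm A

lemma map_mul' {p q r : ℕ} (A : Matrix (Fin p) (Fin q) ℝ) (B : Matrix (Fin q) (Fin r) ℝ) :
    (A * B).map Complex.ofReal = A.map Complex.ofReal * B.map Complex.ofReal :=
  Matrix.map_mul (f := Complex.ofRealHom)

lemma map_one' {p : ℕ} :
    (1 : Matrix (Fin p) (Fin p) ℝ).map Complex.ofReal = 1 :=
  Matrix.map_one _ Complex.ofReal_zero Complex.ofReal_one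

lemma vecMul_map_ne_zero {p : ℕ} {P Q : Matrix (Fin p) (Fin p) ℝ} (hPQ : P * Q = 1)
    {u : Fin p → ℂ} (hu : u ≠ 0) : u ᵥ* P.map Complex.ofReal ≠ 0 := by
  intro h
  apply hu
  have h2 : (u ᵥ* P.map Complex.ofReal) ᵥ* Q.map Complex.ofReal = 0 := by
    rw [h]; exact Matrix.zero_vecMul _
  rwa [Matrix.vecMul_vecMul, ← map_mul', hPQ, map_one', Matrix.vecMul_one] at h2

lemma mu_ne_zero {p : ℕ} {F G : Matrix (Fin p) (Fin p) ℝ} (hFG : F * G = 1)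
    {u : Fin p → ℂ} {μ : ℂ} (hu : u ≠ 0)
    (heig : u ᵥ* F.map Complex.ofReal = μ • u) : μ ≠ 0 := by
  intro hμ
  subst hμ
  rw [zero_smul] at heig
  exact vecMul_map_ne_zero hFG hu heig

lemma bound_of_periodic {n : ℕ} {T : ℝ} (hT : 0 < T) {M : ℝ → Matrix (Fin n) (Fin n) ℝ}
    (hM : ∀ i j, Continuous fun τ => M τ i j) (hMper : ∀ τ, M (τ + T) = M τ) :
    ∃ C : ℝ, 0 ≤ C ∧ ∀ τ i j, |M τ i j| ≤ C := by
  have hc : Continuous fun τ => toPi (M τ) :=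
    continuous_pi fun i => continuous_pi fun j => hM i j
  obtain ⟨C, hC⟩ := (isCompact_Icc (a := (0:ℝ)) (b := T)).exists_bound_of_continuousOn
    hc.continuousOn
  refine ⟨max C 0, le_max_right _ _, fun τ i j => ?_⟩
  obtain ⟨y, hy, hyy⟩ :=
    Function.Periodic.exists_mem_Ico₀ (f := fun τ => toPi (M τ))
      (fun x => by simp [hMper x]) hT τ
  have h1 : |M y i j| ≤ ‖toPi (M y)‖ := by
    calc |M y i j| = ‖toPi (M y) i j‖ := (Real.norm_eq_abs _).symm
    _ ≤ ‖toPi (M y) i‖ := norm_le_pi_norm _ j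
    _ ≤ ‖toPi (M y)‖ := norm_le_pi_norm _ i
  have h2 : ‖toPi (M y)‖ ≤ C := hC _ ⟨hy.1, hy.2.le⟩
  have hMy : M τ i j = M y i j := congrFun (congrFun hyy i) j
  rw [hMy]
  exact le_trans h1 (h2.trans (le_max_left _ _))

lemma ode_uniq {n : ℕ} {T : ℝ} (hT : 0 < T) {M : ℝ → Matrix (Fin n) (Fin n) ℝ}
    (hM : ∀ i j, Continuous fun τ => M τ i j) (hMper : ∀ τ, M (τ + T) = M τ)
    {f g : ℝ → Matrix (Fin n) (Fin n) ℝ}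
    (hf : ∀ τ i j, HasDerivAt (fun t => f t i j) ((M τ * f τ) i j) τ)
    (hg : ∀ τ i j, HasDerivAt (fun t => g t i j) ((M τ * g τ) i j) τ)
    {t₀ : ℝ} (h0 : f t₀ = g t₀) (t : ℝ) : f t = g t := by
  obtain ⟨C, hC0, hC⟩ := bound_of_periodic hT hM hMper
  have hK0 : (0:ℝ) ≤ n * C := by positivity
  set K : NNReal := ⟨n * C, hK0⟩ with hKdef
  set v : ℝ → (Fin n → Fin n → ℝ) → (Fin n → Fin n → ℝ) :=
    fun τ X => toPi (M τ * Matrix.of X) with hv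
  have hlip : ∀ τ, LipschitzOnWith K (v τ) Set.univ := by
    intro τ
    apply LipschitzWith.lipschitzOnWith
    apply LipschitzWith.of_dist_le_mul
    intro X Y
    rw [dist_eq_norm, dist_eq_norm]
    have hsub : v τ X - v τ Y = toPi (M τ * (Matrix.of X - Matrix.of Y)) := by
      show toPi (M τ * Matrix.of X) - toPi (M τ * Matrix.of Y) = _
      rw [Matrix.mul_sub]
      rfl
    rw [hsub]
    have hnn : (0:ℝ) ≤ (K : ℝ) * ‖X - Y‖ := by positivity
    rw [pi_norm_le_iff_of_nonneg hnn]
    intro i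
    rw [pi_norm_le_iff_of_nonneg hnn]
    intro j
    have hentry : ∀ kk, |(Matrix.of X - Matrix.of Y) kk j| ≤ ‖X - Y‖ := by
      intro kk
      calc |(Matrix.of X - Matrix.of Y) kk j| = ‖(X - Y) kk j‖ := rfl
      _ ≤ ‖(X - Y) kk‖ := norm_le_pi_norm _ j
      _ ≤ ‖X - Y‖ := norm_le_pi_norm _ kk
    calc ‖toPi (M τ * (Matrix.of X - Matrix.of Y)) i j‖
        = |∑ kk, M τ i kk * (Matrix.of X - Matrix.of Y) kk j| := by
          show |(M τ * (Matrix.of X - Matrix.of Y)) i j| = _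
          rw [Matrix.mul_apply]
      _ ≤ ∑ kk, |M τ i kk * (Matrix.of X - Matrix.of Y) kk j| :=
          Finset.abs_sum_le_sum_abs _ _
      _ ≤ ∑ _kk : Fin n, C * ‖X - Y‖ := by
          apply Finset.sum_le_sum
          intro kk _
          rw [abs_mul]
          exact mul_le_mul (hC τ i kk) (hentry kk) (abs_nonneg _) hC0
      _ = (n * C) * ‖X - Y‖ := by
          rw [Finset.sum_const, Finset.card_univ, Fintype.card_fin, nsmul_eq_mul]
          ring
      _ = (K : ℝ) * ‖X - Y‖ := rfl
  set a : ℝ := min t₀ t - 1 with ha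
  set b : ℝ := max t₀ t + 1 with hb
  have ht₀ : t₀ ∈ Set.Ioo a b := by
    constructor
    · have := min_le_left t₀ t; simp only [ha]; linarith
    · have := le_max_left t₀ t; simp only [hb]; linarith
  have htt : t ∈ Set.Ioo a b := by
    constructor
    · have := min_le_right t₀ t; simp only [ha]; linarith
    · have := le_max_right t₀ t; simp only [hb]; linarith
  have hfd : ∀ τ ∈ Set.Ioo a b,
      HasDerivAt (fun t => toPi (f t)) (v τ (toPi (f τ))) τ ∧ toPi (f τ) ∈ Set.univ := by
    intro τ _
    refine ⟨?_, trivial⟩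
    rw [hasDerivAt_pi]
    intro i
    rw [hasDerivAt_pi]
    intro j
    exact hf τ i j
  have hgd : ∀ τ ∈ Set.Ioo a b,
      HasDerivAt (fun t => toPi (g t)) (v τ (toPi (g τ))) τ ∧ toPi (g τ) ∈ Set.univ := by
    intro τ _
    refine ⟨?_, trivial⟩
    rw [hasDerivAt_pi]
    intro i
    rw [hasDerivAt_pi]
    intro j
    exact hg τ i j
  have h0' : toPi (f t₀) = toPi (g t₀) := congrArg toPi h0
  have := ODE_solution_unique_of_mem_Ioo (fun τ _ => hlip τ) ht₀ hfd hgd h0' htt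
  exact congrArg Matrix.of this

section
variable {n : ℕ} {T : ℝ}

lemma hasDerivAt_mul_const' {M : ℝ → Matrix (Fin n) (Fin n) ℝ}
    {f : ℝ → Matrix (Fin n) (Fin n) ℝ}
    (hf : ∀ τ i j, HasDerivAt (fun t => f t i j) ((M τ * f τ) i j) τ)
    (Cst : Matrix (Fin n) (Fin n) ℝ) :
    ∀ τ i j, HasDerivAt (fun t => (f t * Cst) i j) ((M τ * (f τ * Cst)) i j) τ := by
  intro τ i j
  have key : HasDerivAt (fun t => ∑ kk, f t i kk * Cst kk j)
      (∑ kk, (M τ * f τ) i kk * Cst kk j) τ :=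
    HasDerivAt.fun_sum fun kk _ => (hf τ i kk).mul_const _
  have h1 : (fun t => (f t * Cst) i j) = fun t => ∑ kk, f t i kk * Cst kk j := by
    funext t; exact Matrix.mul_apply
  have h2 : (M τ * (f τ * Cst)) i j = ∑ kk, (M τ * f τ) i kk * Cst kk j := by
    rw [← Matrix.mul_assoc, Matrix.mul_apply]
  rw [h1, h2]
  exact key

variable (hT : 0 < T) {M : ℝ → Matrix (Fin n) (Fin n) ℝ}
    (hM : ∀ i j, Continuous fun τ => M τ i j)
    (hMper : ∀ τ, M (τ + T) = M τ)
    {Φ : ℝ → ℝ → Matrix (Fin n) (Fin n) ℝ}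
    (hΦinit : ∀ s, Φ s s = 1)
    (hΦode : ∀ s τ, ∀ i j, HasDerivAt (fun t => Φ t s i j) ((M τ * Φ τ s) i j) τ)

include hT hM hMper hΦinit hΦode

lemma cocycle (τ r s : ℝ) : Φ τ s = Φ τ r * Φ r s := by
  have h0 : Φ r s = Φ r r * Φ r s := by rw [hΦinit, Matrix.one_mul]
  exact ode_uniq hT hM hMper (hΦode s) (hasDerivAt_mul_const' (hΦode r) (Φ r s)) h0 τ

lemma phi_per (τ s : ℝ) : Φ (τ + T) (s + T) = Φ τ s := by
  have hfder : ∀ τ i j, HasDerivAt (fun t => Φ (t + T) (s + T) i j)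
      ((M τ * Φ (τ + T) (s + T)) i j) τ := by
    intro τ i j
    have h2 : HasDerivAt (fun t : ℝ => t + T) 1 τ := (hasDerivAt_id τ).add_const T
    have h3 := (hΦode (s + T) (τ + T) i j).comp τ h2
    rw [mul_one] at h3
    rw [← hMper τ]
    exact h3
  have h0 : Φ (s + T) (s + T) = Φ s s := by rw [hΦinit, hΦinit]
  exact ode_uniq hT hM hMper hfder (hΦode s) h0 τ

lemma phi_inv_mul (a b : ℝ) : Φ a b * Φ b a = 1 := by
  rw [← cocycle hT hM hMper hΦinit hΦode a b a, hΦinit]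

lemma phi_inv_eq (a b : ℝ) : (Φ a b)⁻¹ = Φ b a :=
  Matrix.inv_eq_right_inv (phi_inv_mul hT hM hMper hΦinit hΦode a b)

lemma phi_cont2 (τ₁ : ℝ) : Continuous fun s => Φ τ₁ s := by
  have h1 : Continuous fun s => Φ s 0 :=
    continuous_matrix fun i j =>
      continuous_iff_continuousAt.mpr fun s => (hΦode 0 s i j).continuousAt
  have hdet : ∀ s, (Φ s 0).det ≠ 0 := by
    intro s h
    have h2 := congrArg Matrix.det (phi_inv_mul hT hM hMper hΦinit hΦode s 0)
    rw [Matrix.det_mul, Matrix.det_one, h, zero_mul] at h2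
    exact zero_ne_one h2
  have h2 : Continuous fun s => (Φ s 0)⁻¹ := by
    have h3 : Continuous fun s => ((Φ s 0).det)⁻¹ • (Φ s 0).adjugate :=
      (h1.matrix_det.inv₀ hdet).smul h1.matrix_adjugate
    simpa [Matrix.inv_def] using h3
  have h3 : (fun s => Φ τ₁ s) = fun s => Φ τ₁ 0 * (Φ s 0)⁻¹ := by
    funext s
    rw [phi_inv_eq hT hM hMper hΦinit hΦode, ← cocycle hT hM hMper hΦinit hΦode]
  rw [h3]
  exact continuous_const.matrix_mul h2

end

lemma vecMul_map_eq_zero_iff {n k : ℕ} (B : Matrix (Fin n) (Fin k) ℝ) (u : Fin n → ℂ) :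
    u ᵥ* B.map Complex.ofReal = 0 ↔
      ((fun i => (u i).re) ᵥ* B = 0 ∧ (fun i => (u i).im) ᵥ* B = 0) := by
  have hj : ∀ j, (u ᵥ* B.map Complex.ofReal) j =
      Complex.ofReal (((fun i => (u i).re) ᵥ* B) j) +
        Complex.ofReal (((fun i => (u i).im) ᵥ* B) j) * Complex.I := by
    intro j
    simp only [Matrix.vecMul, dotProduct, Matrix.map_apply]
    have hterm : ∀ i : Fin n, u i * Complex.ofReal (B i j) =
        Complex.ofReal ((u i).re * B i j) + Complex.ofReal ((u i).im * B i j) * Complex.I := by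
      intro i
      simp [Complex.ext_iff, Complex.mul_re, Complex.mul_im]
    rw [Finset.sum_congr rfl fun i _ => hterm i, Finset.sum_add_distrib, ← Finset.sum_mul]
    push_cast
    ring
  constructor
  · intro h
    have hz : ∀ j, (((fun i => (u i).re) ᵥ* B) j = 0) ∧ (((fun i => (u i).im) ᵥ* B) j = 0) := by
      intro j
      have h2 := congrFun h j
      rw [hj j] at h2
      have h3 := congrArg Complex.re h2
      have h4 := congrArg Complex.im h2
      simp at h3 h4
      exact ⟨h3, h4⟩
    exact ⟨funext fun j => (hz j).1, funext fun j => (hz j).2⟩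
  · rintro ⟨h1, h2⟩
    funext j
    rw [hj j, congrFun h1 j, congrFun h2 j]
    simp

lemma quad_expand {n : ℕ} (Mat : Matrix (Fin n) (Fin n) ℝ) (c : Fin n → ℝ) :
    c ᵥ* Mat ⬝ᵥ c = ∑ i', ∑ i, c i * Mat i i' * c i' := by
  simp [Matrix.vecMul, dotProduct, Finset.sum_mul]

lemma quadform_eq_sum_sq {n k : ℕ} (B : Matrix (Fin n) (Fin k) ℝ) (c : Fin n → ℝ) :
    c ᵥ* (B * Bᵀ) ⬝ᵥ c = ∑ j, ((c ᵥ* B) j) ^ 2 := by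
  rw [← Matrix.vecMul_vecMul, Matrix.vecMul_transpose, dotProduct_comm,
    dotProduct_mulVec]
  simp [dotProduct, sq]

lemma quad_integral {n m k : ℕ} {τ₀ T : ℝ}
    {A : ℝ → Matrix (Fin n) (Fin m) ℝ} (hA : ∀ i j, Continuous fun s => A s i j)
    {D : Matrix (Fin n) (Fin k) ℝ}
    (hD : ∀ i j, (D * Dᵀ) i j = ∫ s in τ₀..(τ₀ + T), (A s * (A s)ᵀ) i j)
    (c : Fin n → ℝ) :
    c ᵥ* (D * Dᵀ) ⬝ᵥ c = ∫ s in τ₀..(τ₀ + T), ∑ j, ((c ᵥ* A s) j) ^ 2 := by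
  have hAA : ∀ i i', Continuous fun s => (A s * (A s)ᵀ) i i' := by
    intro i i'
    simp only [Matrix.mul_apply, Matrix.transpose_apply]
    exact continuous_finset_sum _ fun j _ => (hA i j).mul (hA i' j)
  have h2 : ∀ (i i' : Fin n), c i * (D * Dᵀ) i i' * c i'
      = ∫ s in τ₀..(τ₀ + T), c i * (A s * (A s)ᵀ) i i' * c i' := by
    intro i i'
    rw [hD i i', ← intervalIntegral.integral_const_mul, ← intervalIntegral.integral_mul_const]
  have h3 : ∀ i', ∑ i, c i * (D * Dᵀ) i i' * c i'
      = ∫ s in τ₀..(τ₀ + T), ∑ i, c i * (A s * (A s)ᵀ) i i' * c i' := by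
    intro i'
    calc ∑ i, c i * (D * Dᵀ) i i' * c i'
        = ∑ i, ∫ s in τ₀..(τ₀ + T), c i * (A s * (A s)ᵀ) i i' * c i' :=
          Finset.sum_congr rfl fun i _ => h2 i i'
      _ = ∫ s in τ₀..(τ₀ + T), ∑ i, c i * (A s * (A s)ᵀ) i i' * c i' :=
          (intervalIntegral.integral_finset_sum fun i _ =>
            ((continuous_const.mul (hAA i i')).mul continuous_const).intervalIntegrable _ _).symm
  have h4 : ∑ i', ∑ i, c i * (D * Dᵀ) i i' * c i'
      = ∫ s in τ₀..(τ₀ + T), ∑ i', ∑ i, c i * (A s * (A s)ᵀ) i i' * c i' := by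
    calc ∑ i', ∑ i, c i * (D * Dᵀ) i i' * c i'
        = ∑ i', ∫ s in τ₀..(τ₀ + T), ∑ i, c i * (A s * (A s)ᵀ) i i' * c i' :=
          Finset.sum_congr rfl fun i' _ => h3 i'
      _ = ∫ s in τ₀..(τ₀ + T), ∑ i', ∑ i, c i * (A s * (A s)ᵀ) i i' * c i' :=
          (intervalIntegral.integral_finset_sum fun i' _ =>
            (continuous_finset_sum _ fun i _ =>
              (continuous_const.mul (hAA i i')).mul continuous_const).intervalIntegrable _ _).symm
  rw [quad_expand, h4]
  apply intervalIntegral.integral_congr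
  intro s _
  simp only []
  rw [← quad_expand, quadform_eq_sum_sq]

lemma key_lemma {n m k : ℕ} {τ₀ T : ℝ} (hT : 0 < T)
    {A : ℝ → Matrix (Fin n) (Fin m) ℝ} (hA : ∀ i j, Continuous fun s => A s i j)
    {D : Matrix (Fin n) (Fin k) ℝ}
    (hD : ∀ i j, (D * Dᵀ) i j = ∫ s in τ₀..(τ₀ + T), (A s * (A s)ᵀ) i j)
    (u : Fin n → ℂ) :
    u ᵥ* D.map Complex.ofReal = 0 ↔
      ∀ s ∈ Set.Icc τ₀ (τ₀ + T), u ᵥ* (A s).map Complex.ofReal = 0 := by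
  set a : Fin n → ℝ := fun i => (u i).re with hadef
  set b : Fin n → ℝ := fun i => (u i).im with hbdef
  set g : ℝ → ℝ := fun s => ∑ j, (((a ᵥ* A s) j) ^ 2 + ((b ᵥ* A s) j) ^ 2) with hgdef
  have hvm : ∀ (c : Fin n → ℝ) (j : Fin m), Continuous fun s => (c ᵥ* A s) j := by
    intro c j
    simp only [Matrix.vecMul, dotProduct]
    exact continuous_finset_sum _ fun i _ => continuous_const.mul (hA i j)
  have hgc : Continuous g :=
    continuous_finset_sum _ fun j _ => (((hvm a j).pow 2).add ((hvm b j).pow 2))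
  have hgnn : ∀ s, 0 ≤ g s := fun s => Finset.sum_nonneg fun j _ => by positivity
  have hint : (∫ s in τ₀..(τ₀ + T), g s)
      = ∑ j, (((a ᵥ* D) j) ^ 2 + ((b ᵥ* D) j) ^ 2) := by
    have ha' := quad_integral hA hD a
    have hb' := quad_integral hA hD b
    have hsplit : (∫ s in τ₀..(τ₀ + T), g s)
        = (∫ s in τ₀..(τ₀ + T), ∑ j, ((a ᵥ* A s) j) ^ 2)
          + ∫ s in τ₀..(τ₀ + T), ∑ j, ((b ᵥ* A s) j) ^ 2 := by
      rw [← intervalIntegral.integral_add]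
      · apply intervalIntegral.integral_congr
        intro s _
        simp [hgdef, Finset.sum_add_distrib]
      · exact (continuous_finset_sum _ fun j _ => (hvm a j).pow 2).intervalIntegrable _ _
      · exact (continuous_finset_sum _ fun j _ => (hvm b j).pow 2).intervalIntegrable _ _
    rw [hsplit, ← ha', ← hb', quadform_eq_sum_sq, quadform_eq_sum_sq, ← Finset.sum_add_distrib]
  constructor
  · intro h0 s hs
    obtain ⟨ha0, hb0⟩ := (vecMul_map_eq_zero_iff D u).mp h0
    have ha0' : a ᵥ* D = 0 := ha0
    have hb0' : b ᵥ* D = 0 := hb0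
    have hZ : (∫ s in τ₀..(τ₀ + T), g s) = 0 := by
      rw [hint]
      simp [ha0', hb0']
    have hg0 : Set.EqOn g 0 (Set.Icc τ₀ (τ₀ + T)) := by
      have hae : g =ᵐ[MeasureTheory.volume.restrict (Set.Ioc τ₀ (τ₀ + T))] 0 := by
        refine (intervalIntegral.integral_eq_zero_iff_of_le_of_nonneg_ae (by linarith)
          (Filter.Eventually.of_forall hgnn) (hgc.intervalIntegrable _ _)).mp hZ
      have heqon := MeasureTheory.Measure.eqOn_Ioc_of_ae_eq (μ := MeasureTheory.volume) hae
        hgc.continuousOn continuousOn_const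
      have hclos := heqon.closure hgc continuous_const
      rwa [closure_Ioc (by linarith : τ₀ ≠ τ₀ + T)] at hclos
    have hgs : g s = 0 := hg0 hs
    have hterm : ∀ j : Fin m, (((a ᵥ* A s) j) ^ 2 + ((b ᵥ* A s) j) ^ 2) = 0 := by
      have := (Finset.sum_eq_zero_iff_of_nonneg
        (fun j _ => by positivity : ∀ j ∈ Finset.univ,
          (0:ℝ) ≤ ((a ᵥ* A s) j) ^ 2 + ((b ᵥ* A s) j) ^ 2)).mp hgs
      exact fun j => this j (Finset.mem_univ j)
    apply (vecMul_map_eq_zero_iff (A s) u).mpr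
    constructor <;> funext j <;>
    · have h5 := hterm j
      have h6 : (a ᵥ* A s) j = 0 ∧ (b ᵥ* A s) j = 0 := by
        constructor <;> nlinarith [sq_nonneg ((a ᵥ* A s) j), sq_nonneg ((b ᵥ* A s) j)]
      simp only [hadef, hbdef] at h6
      simp [h6.1, h6.2]
  · intro h
    have hgz : ∀ s ∈ Set.Icc τ₀ (τ₀ + T), g s = 0 := by
      intro s hs
      obtain ⟨ha0, hb0⟩ := (vecMul_map_eq_zero_iff (A s) u).mp (h s hs)
      have ha0' : a ᵥ* A s = 0 := ha0
      have hb0' : b ᵥ* A s = 0 := hb0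
      simp [hgdef, ha0', hb0']
    have hZ : (∫ s in τ₀..(τ₀ + T), g s) = 0 := by
      rw [intervalIntegral.integral_congr (g := fun _ => (0:ℝ))
        (fun s hs => hgz s (by rwa [Set.uIcc_of_le (by linarith)] at hs))]
      simp
    rw [hint] at hZ
    have hterm := (Finset.sum_eq_zero_iff_of_nonneg
      (fun j _ => by positivity : ∀ j ∈ Finset.univ,
        (0:ℝ) ≤ ((a ᵥ* D) j) ^ 2 + ((b ᵥ* D) j) ^ 2)).mp hZ
    apply (vecMul_map_eq_zero_iff D u).mpr
    constructor <;> funext j <;>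
    · have h5 := hterm j (Finset.mem_univ j)
      have h6 : (a ᵥ* D) j = 0 ∧ (b ᵥ* D) j = 0 := by
        constructor <;> nlinarith [sq_nonneg ((a ᵥ* D) j), sq_nonneg ((b ᵥ* D) j)]
      simp only [hadef, hbdef] at h6
      simp [h6.1, h6.2]

end Stmt6Aux

open Stmt6Aux

/-- Proposition 9 in Bolzern–Colaneri. For continuous `T`-periodic `M, N`,
`τ₀ ∈ [0,T)` and any real matrix `D` with
`D Dᵀ = ∫_{τ₀}^{τ₀+T} Φ_M(τ₀+T,s) N(s) N(s)ᵀ Φ_M(τ₀+T,s)ᵀ ds`, the pair `(M(·), N(·))` is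
controllable iff the time-invariant pair `(Φ̄_M(τ₀), D)` is controllable.
Here `Φ τ s` denotes the state transition matrix `Φ_M(τ, s)`. -/
theorem stmt_6 (n m k : ℕ) (T : ℝ) (hT : 0 < T)
    (M : ℝ → Matrix (Fin n) (Fin n) ℝ) (N : ℝ → Matrix (Fin n) (Fin m) ℝ)
    (hM : ∀ i j, Continuous fun τ => M τ i j)
    (hMper : ∀ τ, M (τ + T) = M τ)
    (hN : ∀ i j, Continuous fun τ => N τ i j)
    (hNper : ∀ τ, N (τ + T) = N τ)
    (Φ : ℝ → ℝ → Matrix (Fin n) (Fin n) ℝ)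
    (hΦinit : ∀ s, Φ s s = 1)
    (hΦode : ∀ s τ, ∀ i j, HasDerivAt (fun t => Φ t s i j) ((M τ * Φ τ s) i j) τ)
    (τ₀ : ℝ) (hτ₀ : τ₀ ∈ Set.Ico (0:ℝ) T)
    (D : Matrix (Fin n) (Fin k) ℝ)
    (hD : D * Dᵀ = Matrix.of fun i j =>
      ∫ s in τ₀..(τ₀ + T), (Φ (τ₀ + T) s * N s * (N s)ᵀ * (Φ (τ₀ + T) s)ᵀ) i j) :
    PerControllable T (fun τ => Φ τ 0) N ↔ CtrlPair (Φ (τ₀ + T) τ₀) D := by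
  obtain ⟨hτ₀0, hτ₀T⟩ := hτ₀
  have coc := cocycle hT hM hMper hΦinit hΦode
  have per := phi_per hT hM hMper hΦinit hΦode
  have pim := phi_inv_mul hT hM hMper hΦinit hΦode
  have pie := phi_inv_eq hT hM hMper hΦinit hΦode
  have pc2 := phi_cont2 hT hM hMper hΦinit hΦode
  have hAc : ∀ i j, Continuous fun s => (Φ (τ₀ + T) s * N s) i j := fun i j =>
    ((pc2 (τ₀ + T)).matrix_mul (continuous_matrix hN)).matrix_elem i j
  have hAAs : ∀ s : ℝ, Φ (τ₀ + T) s * N s * (N s)ᵀ * (Φ (τ₀ + T) s)ᵀ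
      = (Φ (τ₀ + T) s * N s) * (Φ (τ₀ + T) s * N s)ᵀ := fun s => by
    rw [Matrix.transpose_mul, ← Matrix.mul_assoc]
  have hDij : ∀ i j, (D * Dᵀ) i j = ∫ s in τ₀..(τ₀ + T),
      ((Φ (τ₀ + T) s * N s) * (Φ (τ₀ + T) s * N s)ᵀ) i j := by
    intro i j
    rw [hD]
    simp only [Matrix.of_apply]
    apply intervalIntegral.integral_congr
    intro s _
    simp only []
    rw [hAAs s]
  have hkey := fun u : Fin n → ℂ =>
    key_lemma (A := fun s => Φ (τ₀ + T) s * N s) hT hAc hDij u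
  have hkerEq : ∀ (τ : ℝ) (u : Fin n → ℂ),
      u ᵥ* ((Φ τ 0)⁻¹.map Complex.ofReal * (N τ).map Complex.ofReal)
        = u ᵥ* ((Φ 0 τ * N τ).map Complex.ofReal) := by
    intro τ u
    rw [pie, ← map_mul']
  have hstar : Φ 0 τ₀ * Φ (τ₀ + T) τ₀ = Φ T 0 * Φ 0 τ₀ := by
    have h1 : Φ (τ₀ + T) τ₀ = Φ (τ₀ + T) T * Φ T τ₀ := coc _ _ _
    have h2 : Φ (τ₀ + T) T = Φ τ₀ 0 := by have := per τ₀ 0; rwa [zero_add] at this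
    rw [h1, h2, ← Matrix.mul_assoc, pim 0 τ₀, Matrix.one_mul]
    exact coc T 0 τ₀
  unfold PerControllable CtrlPair
  rw [not_iff_not]
  constructor
  · rintro ⟨u, μ, hu0, heig, hker⟩
    refine ⟨u ᵥ* (Φ 0 τ₀).map Complex.ofReal, μ, vecMul_map_ne_zero (pim 0 τ₀) hu0, ?_, ?_⟩
    · calc (u ᵥ* (Φ 0 τ₀).map Complex.ofReal) ᵥ* (Φ (τ₀ + T) τ₀).map Complex.ofReal
          = u ᵥ* ((Φ 0 τ₀ * Φ (τ₀ + T) τ₀).map Complex.ofReal) := by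
            rw [Matrix.vecMul_vecMul, ← map_mul']
        _ = u ᵥ* ((Φ T 0 * Φ 0 τ₀).map Complex.ofReal) := by rw [hstar]
        _ = (u ᵥ* (Φ T 0).map Complex.ofReal) ᵥ* (Φ 0 τ₀).map Complex.ofReal := by
            rw [map_mul', ← Matrix.vecMul_vecMul]
        _ = (μ • u) ᵥ* (Φ 0 τ₀).map Complex.ofReal := by rw [heig]
        _ = μ • (u ᵥ* (Φ 0 τ₀).map Complex.ofReal) := Matrix.smul_vecMul _ _ _
    · apply (hkey (u ᵥ* (Φ 0 τ₀).map Complex.ofReal)).mpr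
      intro s hs
      show (u ᵥ* (Φ 0 τ₀).map Complex.ofReal) ᵥ*
        ((Φ (τ₀ + T) s * N s).map Complex.ofReal) = 0
      have hrw : Φ 0 τ₀ * (Φ (τ₀ + T) s * N s) = Φ T 0 * Φ 0 s * N s := by
        rw [coc (τ₀ + T) τ₀ s]
        simp only [← Matrix.mul_assoc]
        rw [hstar, Matrix.mul_assoc (Φ T 0) (Φ 0 τ₀) (Φ τ₀ s), ← coc 0 τ₀ s]
      rw [Matrix.vecMul_vecMul, ← map_mul', hrw]
      rcases le_or_gt s T with hsT | hsT
      · have hker_s := hker s ⟨le_trans hτ₀0 hs.1, hsT⟩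
        rw [hkerEq] at hker_s
        calc u ᵥ* ((Φ T 0 * Φ 0 s * N s).map Complex.ofReal)
            = (u ᵥ* (Φ T 0).map Complex.ofReal) ᵥ* ((Φ 0 s * N s).map Complex.ofReal) := by
              rw [Matrix.mul_assoc, map_mul', ← Matrix.vecMul_vecMul]
          _ = (μ • u) ᵥ* ((Φ 0 s * N s).map Complex.ofReal) := by rw [heig]
          _ = μ • (u ᵥ* ((Φ 0 s * N s).map Complex.ofReal)) := Matrix.smul_vecMul _ _ _
          _ = 0 := by rw [hker_s, smul_zero]
      · have hsmem : s - T ∈ Set.Icc (0:ℝ) T := ⟨by linarith, by linarith [hs.2]⟩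
        have hker_s := hker (s - T) hsmem
        rw [hkerEq] at hker_s
        have hmat : Φ T 0 * Φ 0 s * N s = Φ T 0 * Φ 0 T * (Φ 0 (s - T) * N (s - T)) := by
          have h1 : Φ 0 s = Φ 0 T * Φ T s := coc 0 T s
          have h2 : Φ T s = Φ 0 (s - T) := by
            have := per 0 (s - T)
            rw [zero_add, sub_add_cancel] at this
            exact this
          have h3 : N s = N (s - T) := by
            have := hNper (s - T)
            rw [sub_add_cancel] at this
            exact this
          rw [h1, h2, h3]
          simp only [← Matrix.mul_assoc]
        rw [hmat, pim T 0, Matrix.one_mul]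
        exact hker_s
  · rintro ⟨u, μ, hu0, heig, hDker⟩
    have hμ : μ ≠ 0 := mu_ne_zero (pim (τ₀ + T) τ₀) hu0 heig
    have h0 := (hkey u).mp hDker
    have hker2 : ∀ s ∈ Set.Icc τ₀ (τ₀ + T),
        u ᵥ* ((Φ τ₀ s * N s).map Complex.ofReal) = 0 := by
      intro s hs
      have h1 : μ • (u ᵥ* ((Φ τ₀ s * N s).map Complex.ofReal)) = 0 := by
        calc μ • (u ᵥ* ((Φ τ₀ s * N s).map Complex.ofReal))
            = (μ • u) ᵥ* ((Φ τ₀ s * N s).map Complex.ofReal) :=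
              (Matrix.smul_vecMul _ _ _).symm
          _ = (u ᵥ* (Φ (τ₀ + T) τ₀).map Complex.ofReal) ᵥ*
              ((Φ τ₀ s * N s).map Complex.ofReal) := by rw [heig]
          _ = u ᵥ* ((Φ (τ₀ + T) τ₀ * (Φ τ₀ s * N s)).map Complex.ofReal) := by
              rw [Matrix.vecMul_vecMul, ← map_mul']
          _ = u ᵥ* ((Φ (τ₀ + T) s * N s).map Complex.ofReal) := by
              rw [show Φ (τ₀ + T) τ₀ * (Φ τ₀ s * N s) = Φ (τ₀ + T) s * N s from by
                rw [← Matrix.mul_assoc, ← coc (τ₀ + T) τ₀ s]]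
          _ = 0 := h0 s hs
      exact (smul_eq_zero.mp h1).resolve_left hμ
    refine ⟨u ᵥ* (Φ τ₀ 0).map Complex.ofReal, μ, vecMul_map_ne_zero (pim τ₀ 0) hu0, ?_, ?_⟩
    · have hstar2 : Φ τ₀ 0 * Φ T 0 = Φ (τ₀ + T) τ₀ * Φ τ₀ 0 := by
        have h2 : Φ (τ₀ + T) T = Φ τ₀ 0 := by have := per τ₀ 0; rwa [zero_add] at this
        calc Φ τ₀ 0 * Φ T 0 = Φ (τ₀ + T) T * Φ T 0 := by rw [h2]
          _ = Φ (τ₀ + T) 0 := (coc _ _ _).symm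
          _ = Φ (τ₀ + T) τ₀ * Φ τ₀ 0 := coc _ _ _
      calc (u ᵥ* (Φ τ₀ 0).map Complex.ofReal) ᵥ* (Φ T 0).map Complex.ofReal
          = u ᵥ* ((Φ τ₀ 0 * Φ T 0).map Complex.ofReal) := by
            rw [Matrix.vecMul_vecMul, ← map_mul']
        _ = u ᵥ* ((Φ (τ₀ + T) τ₀ * Φ τ₀ 0).map Complex.ofReal) := by rw [hstar2]
        _ = (u ᵥ* (Φ (τ₀ + T) τ₀).map Complex.ofReal) ᵥ* (Φ τ₀ 0).map Complex.ofReal := by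
            rw [map_mul', ← Matrix.vecMul_vecMul]
        _ = (μ • u) ᵥ* (Φ τ₀ 0).map Complex.ofReal := by rw [heig]
        _ = μ • (u ᵥ* (Φ τ₀ 0).map Complex.ofReal) := Matrix.smul_vecMul _ _ _
    · intro τ hτ
      rw [hkerEq, Matrix.vecMul_vecMul, ← map_mul',
        show Φ τ₀ 0 * (Φ 0 τ * N τ) = Φ τ₀ τ * N τ from by
          rw [← Matrix.mul_assoc, ← coc τ₀ 0 τ]]
      rcases le_or_gt τ₀ τ with hcase | hcase
      · exact hker2 τ ⟨hcase, by linarith [hτ.2]⟩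
      · have hmem : τ + T ∈ Set.Icc τ₀ (τ₀ + T) := ⟨by linarith [hτ.1], by linarith⟩
        have h5 := hker2 (τ + T) hmem
        have h6 : Φ τ₀ (τ + T) * N (τ + T) = Φ τ₀ (τ₀ + T) * (Φ τ₀ τ * N τ) := by
          rw [hNper τ, coc τ₀ (τ₀ + T) (τ + T), per τ₀ τ, Matrix.mul_assoc]
        rw [h6] at h5
        have h7 : u ᵥ* ((Φ τ₀ τ * N τ).map Complex.ofReal)
            = μ • (u ᵥ* ((Φ τ₀ (τ₀ + T) * (Φ τ₀ τ * N τ)).map Complex.ofReal)) := by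
          calc u ᵥ* ((Φ τ₀ τ * N τ).map Complex.ofReal)
              = u ᵥ* ((Φ (τ₀ + T) τ₀ * Φ τ₀ (τ₀ + T) * (Φ τ₀ τ * N τ)).map Complex.ofReal) := by
                rw [pim (τ₀ + T) τ₀, Matrix.one_mul]
            _ = (u ᵥ* (Φ (τ₀ + T) τ₀).map Complex.ofReal) ᵥ*
                ((Φ τ₀ (τ₀ + T) * (Φ τ₀ τ * N τ)).map Complex.ofReal) := by
                rw [Matrix.mul_assoc, map_mul', ← Matrix.vecMul_vecMul]
            _ = (μ • u) ᵥ* ((Φ τ₀ (τ₀ + T) * (Φ τ₀ τ * N τ)).map Complex.ofReal) := by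
                rw [heig]
            _ = μ • (u ᵥ* ((Φ τ₀ (τ₀ + T) * (Φ τ₀ τ * N τ)).map Complex.ofReal)) :=
                Matrix.smul_vecMul _ _ _
        rw [h7, h5, smul_zero]
end

section
/- Let b : ℝ^d → ℝ^d be continuously differentiable, let γ : ℝ → ℝ^d be a T-periodic solution of γ̇(τ) = b(γ(τ)) with γ̇(τ) ≠ 0 for all τ. Let λ : ℝ → ℝ be a differentiable T-periodic nowhere-zero scalar function, and let E : ℝ → Mat(d×d, ℝ) be a differentiable T-periodic matrix-valued function such that E(τ) is invertible for all τ and the first column of E(τ) equals λ(τ)γ̇(τ). Set Ω(τ) := E(τ)⁻¹Ė(τ), M(τ) := E(τ)⁻¹ ∂ₓb(γ(τ)) E(τ) − Ω(τ), and let M̃(τ) be the (d−1)×(d−1) submatrix of M(τ) obtained by deleting its first row and first column. Then the characteristic polynomial of the monodromy matrix Φ_{∂ₓb(γ(·))}(T,0) equals (X − 1) times the characteristic polynomial of Φ_{M̃}(T,0); in particular the eigenvalues of Φ_{∂ₓb(γ(·))}(T,0) consist of 1 together with the eigenvalues of Φ_{M̃}(T,0), and hence M̃(·) is asymptotically stable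 if and only if the nontrivial characteristic multipliers of the first-variation equation ẏ = ∂ₓb(γ(τ))y all lie inside the open unit disk. -/
open Matrix

open Matrix Polynomial

namespace Stmt7Aux

variable {m k p : ℕ}

lemma hasDerivAt_entry_mul {A : ℝ → Matrix (Fin m) (Fin k) ℝ} {B : ℝ → Matrix (Fin k) (Fin p) ℝ}
    {A' : Matrix (Fin m) (Fin k) ℝ} {B' : Matrix (Fin k) (Fin p) ℝ} {τ : ℝ}
    (hA : ∀ i j, HasDerivAt (fun t => A t i j) (A' i j) τ)
    (hB : ∀ i j, HasDerivAt (fun t => B t i j) (B' i j) τ) (i : Fin m) (j : Fin p) :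
    HasDerivAt (fun t => (A t * B t) i j) ((A' * B τ + A τ * B') i j) τ := by
  have h : ∀ t, (A t * B t) i j = ∑ q : Fin k, A t i q * B t q j := fun t => Matrix.mul_apply
  simp only [h, Matrix.add_apply, Matrix.mul_apply, ← Finset.sum_add_distrib]
  exact HasDerivAt.fun_sum fun q _ => (hA i q).mul (hB q j)

lemma hasDerivAt_mulVec {A : ℝ → Matrix (Fin m) (Fin k) ℝ} {x : ℝ → Fin k → ℝ}
    {A' : Matrix (Fin m) (Fin k) ℝ} {x' : Fin k → ℝ} {τ : ℝ}
    (hA : ∀ i j, HasDerivAt (fun t => A t i j) (A' i j) τ)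
    (hx : HasDerivAt x x' τ) :
    HasDerivAt (fun t => A t *ᵥ x t) (A' *ᵥ x τ + A τ *ᵥ x') τ := by
  rw [hasDerivAt_pi]
  intro i
  have h : ∀ t, (A t *ᵥ x t) i = ∑ q : Fin k, A t i q * x t q := fun t => rfl
  simp only [h, Pi.add_apply, Matrix.mulVec, dotProduct, ← Finset.sum_add_distrib]
  exact HasDerivAt.fun_sum fun q _ => (hA i q).mul (hasDerivAt_pi.1 hx q)

lemma differentiableAt_det {A : ℝ → Matrix (Fin m) (Fin m) ℝ} {τ : ℝ}
    (hA : ∀ i j, DifferentiableAt ℝ (fun t => A t i j) τ) :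
    DifferentiableAt ℝ (fun t => (A t).det) τ := by
  have h : ∀ t, (A t).det = ∑ σ : Equiv.Perm (Fin m),
      ((Equiv.Perm.sign σ : ℤ) : ℝ) * ∏ i, A t (σ i) i := by
    intro t
    rw [Matrix.det_apply]
    refine Finset.sum_congr rfl fun σ _ => ?_
    rw [Units.smul_def, zsmul_eq_mul]
  simp only [h]
  refine DifferentiableAt.fun_sum fun σ _ => DifferentiableAt.const_mul ?_ _
  exact (HasDerivAt.fun_finsetProd fun i _ => (hA (σ i) i).hasDerivAt).differentiableAt

end Stmt7Aux

namespace Stmt7Aux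

lemma matinv_hasDerivAt {E E' : ℝ → Matrix (Fin m) (Fin m) ℝ}
    (hE : ∀ τ i j, HasDerivAt (fun t => E t i j) (E' τ i j) τ)
    (hinv : ∀ τ, IsUnit (E τ).det) :
    ∀ τ i j, HasDerivAt (fun t => (E t)⁻¹ i j) ((-((E τ)⁻¹ * E' τ * (E τ)⁻¹)) i j) τ := by
  have hdiff : ∀ i j, Differentiable ℝ fun t => (E t)⁻¹ i j := by
    intro i j τ
    have h1 : DifferentiableAt ℝ (fun t => (E t).det) τ :=
      differentiableAt_det fun i j => (hE τ i j).differentiableAt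
    have h2 : DifferentiableAt ℝ (fun t => (E t).adjugate i j) τ := by
      simp only [Matrix.adjugate_apply]
      refine differentiableAt_det fun a c => ?_
      by_cases h : a = j
      · subst h
        simp only [Matrix.updateRow_self]
        exact differentiableAt_const _
      · simp only [Matrix.updateRow_ne h]
        exact (hE τ a c).differentiableAt
    have h : (fun t => (E t)⁻¹ i j) = fun t => ((E t).det)⁻¹ * (E t).adjugate i j := by
      funext t
      rw [Matrix.inv_def, Ring.inverse_eq_inv', Matrix.smul_apply, smul_eq_mul]
    rw [h]
    exact (h1.inv (hinv τ).ne_zero).mul h2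
  intro τ i j
  set F : ℝ → Matrix (Fin m) (Fin m) ℝ := fun t => (E t)⁻¹ with hFdef
  set D : Matrix (Fin m) (Fin m) ℝ := fun i j => deriv (fun t => F t i j) τ with hDdef
  have hFd : ∀ i j, HasDerivAt (fun t => F t i j) (D i j) τ := fun i j =>
    ((hdiff i j) τ).hasDerivAt
  -- product rule on F * E = 1
  have hprod : ∀ i j, HasDerivAt (fun t => (F t * E t) i j) ((D * E τ + F τ * E' τ) i j) τ :=
    hasDerivAt_entry_mul hFd (hE τ)
  have hone : ∀ t, F t * E t = 1 := fun t => Matrix.nonsing_inv_mul _ (hinv t)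
  have hzero : D * E τ + F τ * E' τ = 0 := by
    ext i j
    have h1 : HasDerivAt (fun t => (F t * E t) i j) 0 τ := by
      have : (fun t => (F t * E t) i j) = fun _ => (1 : Matrix (Fin m) (Fin m) ℝ) i j := by
        funext t; rw [hone t]
      rw [this]; exact hasDerivAt_const _ _
    have := (hprod i j).unique h1
    simpa using this
  have hD : D = -(F τ * E' τ * F τ) := by
    have h2 : D * (E τ * F τ) = -(F τ * E' τ * F τ) := by
      rw [← Matrix.mul_assoc]
      have : D * E τ = -(F τ * E' τ) := by
        have := hzero
        rw [add_eq_zero_iff_eq_neg] at this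
        exact this
      rw [this, Matrix.neg_mul]
    rwa [Matrix.mul_nonsing_inv _ (hinv τ), Matrix.mul_one] at h2
  rw [← hD]
  exact hFd i j
end Stmt7Aux


open Matrix Set

namespace Stmt7Aux

variable {m : ℕ}

lemma ode_unique (A : ℝ → Matrix (Fin m) (Fin m) ℝ) (hA : ∀ i j, Continuous fun τ => A τ i j)
    {f g : ℝ → Fin m → ℝ} {t₀ : ℝ}
    (hf : ∀ τ, HasDerivAt f (A τ *ᵥ f τ) τ) (hg : ∀ τ, HasDerivAt g (A τ *ᵥ g τ) τ)
    (h0 : f t₀ = g t₀) : ∀ τ, f τ = g τ := by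
  intro τ
  set a : ℝ := min τ t₀ - 1 with ha
  set b : ℝ := max τ t₀ + 1 with hb
  have hab : a ≤ b := by
    have h1 : min τ t₀ ≤ max τ t₀ := le_trans (min_le_left _ _) (le_max_left _ _)
    linarith
  -- clamp
  set cl : ℝ → ℝ := fun t => max a (min t b) with hcl
  have hclmem : ∀ t, cl t ∈ Icc a b := fun t =>
    ⟨le_max_left _ _, max_le hab (min_le_right _ _)⟩
  have hcleq : ∀ t ∈ Icc a b, cl t = t := by
    intro t ht
    simp only [hcl]
    rw [min_eq_left ht.2, max_eq_right ht.1]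
  -- bound
  have hcont : Continuous fun t => ∑ i : Fin m, ∑ j : Fin m, |A t i j| := by
    refine continuous_finset_sum _ fun i _ => continuous_finset_sum _ fun j _ => ?_
    exact (hA i j).abs
  obtain ⟨C, hC⟩ := (isCompact_Icc (a := a) (b := b)).exists_bound_of_continuousOn
    hcont.continuousOn
  have hCnn : 0 ≤ C := le_trans (norm_nonneg _) (hC a ⟨le_rfl, hab⟩)
  have hentry : ∀ t ∈ Icc a b, ∀ i, ∑ j, |A t i j| ≤ C := by
    intro t ht i
    refine le_trans ?_ (le_trans (le_abs_self _) (hC t ht))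
    refine Finset.single_le_sum (f := fun i => ∑ j, |A t i j|) (fun i _ => ?_) (Finset.mem_univ i)
    positivity
  set v : ℝ → (Fin m → ℝ) → (Fin m → ℝ) := fun t x => A (cl t) *ᵥ x with hv
  have hlip : ∀ t, LipschitzWith C.toNNReal (v t) := by
    intro t
    refine LipschitzWith.of_dist_le_mul fun x y => ?_
    rw [dist_pi_le_iff (by positivity)]
    intro i
    have h1 : v t x i - v t y i = ∑ j, A (cl t) i j * (x j - y j) := by
      simp only [hv, Matrix.mulVec, dotProduct, ← Finset.sum_sub_distrib]
      exact Finset.sum_congr rfl fun j _ => by ring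
    rw [Real.dist_eq, h1]
    calc |∑ j, A (cl t) i j * (x j - y j)| ≤ ∑ j, |A (cl t) i j * (x j - y j)| :=
          Finset.abs_sum_le_sum_abs _ _
      _ ≤ ∑ j, |A (cl t) i j| * dist x y := by
          refine Finset.sum_le_sum fun j _ => ?_
          rw [abs_mul]
          refine mul_le_mul_of_nonneg_left ?_ (abs_nonneg _)
          rw [← Real.dist_eq]
          exact dist_le_pi_dist x y j
      _ ≤ C * dist x y := by
          rw [← Finset.sum_mul]
          exact mul_le_mul_of_nonneg_right (hentry _ (hclmem t) i) dist_nonneg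
      _ = ↑C.toNNReal * dist x y := by
          rw [Real.coe_toNNReal _ hCnn]
  have ht₀ : t₀ ∈ Ioo a b := by
    constructor
    · have := min_le_right τ t₀; linarith
    · have := le_max_right τ t₀; linarith
  have hτ : τ ∈ Icc a b := by
    constructor
    · have := min_le_left τ t₀; linarith
    · have := le_max_left τ t₀; linarith
  have heq := ODE_solution_unique_of_mem_Icc (v := v) (s := fun _ => univ)
    (fun t _ => (hlip t).lipschitzOnWith) ht₀
    (fun t _ => ((hf t).continuousAt).continuousWithinAt)
    (fun t ht => by rw [hv]; simpa [hcleq t (Ioo_subset_Icc_self ht)] using hf t)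
    (fun t _ => mem_univ _)
    (fun t _ => ((hg t).continuousAt).continuousWithinAt)
    (fun t ht => by rw [hv]; simpa [hcleq t (Ioo_subset_Icc_self ht)] using hg t)
    (fun t _ => mem_univ _) h0
  exact heq hτ

end Stmt7Aux


open Matrix Polynomial

namespace Stmt7Aux

variable {m : ℕ}

lemma charpoly_conj (P A : Matrix (Fin m) (Fin m) ℝ) (hP : IsUnit P.det) :
    (P⁻¹ * A * P).charpoly = A.charpoly := by
  have hmap : ∀ (X Y : Matrix (Fin m) (Fin m) ℝ),
      (X * Y).map (C : ℝ → ℝ[X]) = X.map C * Y.map C := fun X Y =>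
    Matrix.map_mul
  have h1 : charmatrix (P⁻¹ * A * P) = (P⁻¹).map C * charmatrix A * P.map C := by
    unfold charmatrix
    rw [Matrix.mul_sub, Matrix.sub_mul]
    congr 1
    · -- scalar part
      have hc : (Matrix.scalar (Fin m) (X : ℝ[X])) * (P.map C)
          = (P.map C) * (Matrix.scalar (Fin m) (X : ℝ[X])) :=
        Matrix.scalar_commute _ (fun r => Commute.all _ _) _
      rw [Matrix.mul_assoc, hc, ← Matrix.mul_assoc, ← hmap,
        Matrix.nonsing_inv_mul _ hP, Matrix.map_one _ (map_zero C) (map_one C),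
        Matrix.one_mul]
    · simp only [RingHom.mapMatrix_apply]
      rw [hmap, hmap]
  rw [Matrix.charpoly, Matrix.charpoly, h1, Matrix.det_mul, Matrix.det_mul]
  have h2 : ((P⁻¹).map C).det * (P.map C).det = 1 := by
    rw [← Matrix.det_mul, ← hmap, Matrix.nonsing_inv_mul _ hP,
      Matrix.map_one _ (map_zero C) (map_one C), Matrix.det_one]
  calc ((P⁻¹).map C).det * (charmatrix A).det * (P.map C).det
      = (charmatrix A).det * (((P⁻¹).map C).det * (P.map C).det) := by ring
    _ = A.charpoly := by rw [h2, mul_one]; rfl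

lemma charpoly_block (W : Matrix (Fin (m + 1)) (Fin (m + 1)) ℝ)
    (hcol : ∀ i, W i 0 = (Pi.single (0 : Fin (m + 1)) (1 : ℝ) : Fin (m + 1) → ℝ) i) :
    W.charpoly = (X - 1) * (W.submatrix Fin.succ Fin.succ).charpoly := by
  rw [Matrix.charpoly, Matrix.det_succ_column_zero]
  rw [Finset.sum_eq_single_of_mem (0 : Fin (m + 1)) (Finset.mem_univ _)]
  · have h00 : W 0 0 = 1 := by rw [hcol 0, Pi.single_eq_same]
    have hcm : charmatrix W 0 0 = X - 1 := by
      rw [charmatrix_apply_eq, h00, Polynomial.C_1]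
    rw [hcm]
    have hsub : (charmatrix W).submatrix (Fin.succAbove 0) Fin.succ =
        charmatrix (W.submatrix Fin.succ Fin.succ) := by
      ext i j
      rw [Matrix.submatrix_apply, Fin.succAbove_zero]
      by_cases h : i = j
      · subst h
        rw [charmatrix_apply_eq, charmatrix_apply_eq, Matrix.submatrix_apply]
      · rw [charmatrix_apply_ne _ _ _ (fun hc => h (Fin.succ_injective _ hc)),
          charmatrix_apply_ne _ _ _ h, Matrix.submatrix_apply]
    rw [hsub]
    simp [Matrix.charpoly]
  · intro i _ hi
    have h : charmatrix W i 0 = 0 := by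
      rw [charmatrix_apply_ne _ _ _ hi, hcol i, Pi.single_eq_of_ne hi, map_zero, neg_zero]
    rw [h]
    ring

lemma mem_spectrum_iff_root (A : Matrix (Fin m) (Fin m) ℂ) (μ : ℂ) :
    μ ∈ spectrum ℂ A ↔ A.charpoly.eval μ = 0 := by
  rw [spectrum.mem_iff]
  have hdet : ((algebraMap ℂ (Matrix (Fin m) (Fin m) ℂ)) μ - A).det = A.charpoly.eval μ := by
    rw [Matrix.charpoly, Polynomial.eval, ← Polynomial.coe_eval₂RingHom, RingHom.map_det]
    congr 1
    ext i j
    by_cases h : i = j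
    · subst h
      simp [charmatrix_apply_eq, Matrix.algebraMap_matrix_apply]
    · simp [charmatrix_apply_ne _ _ _ h, Matrix.algebraMap_matrix_apply, h]
  rw [Matrix.isUnit_iff_isUnit_det, isUnit_iff_ne_zero, not_ne_iff, hdet]

end Stmt7Aux


/-- Along a `T`-periodic solution `γ` of `γ̇ = b(γ)` with nonvanishing
velocity, given a `T`-periodic differentiable invertible moving frame `E` whose first column
is `λ(τ)γ̇(τ)`, set `Ω = E⁻¹Ė`, `M = E⁻¹ ∂ₓb(γ) E - Ω` and let `M̃` be the submatrix of `M`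
deleting the first row and column.  Then the characteristic polynomial of the monodromy
matrix `Φ_{∂ₓb(γ(·))}(T,0)` equals `(X - 1)` times that of `Φ_{M̃}(T,0)`; in particular the
eigenvalues of the former consist of `1` together with the eigenvalues of the latter, and
`M̃(·)` is asymptotically stable iff all nontrivial characteristic multipliers of the
first-variation equation lie inside the open unit disk. -/
theorem stmt_7 (n : ℕ) (T : ℝ) (hT : 0 < T)
    (b : (Fin (n + 1) → ℝ) → (Fin (n + 1) → ℝ))
    (J : ℝ → Matrix (Fin (n + 1)) (Fin (n + 1)) ℝ)
    (γ : ℝ → Fin (n + 1) → ℝ)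
    (hγ : ∀ τ, HasDerivAt γ (b (γ τ)) τ)
    (hγper : ∀ τ, γ (τ + T) = γ τ)
    (hγ' : ∀ τ, b (γ τ) ≠ 0)
    (hb : ∀ τ, HasFDerivAt b (LinearMap.toContinuousLinearMap
      (Matrix.mulVecLin (J τ))) (γ τ))
    (hJcont : ∀ i j, Continuous fun τ => J τ i j)
    (l : ℝ → ℝ) (hl : Differentiable ℝ l)
    (hlper : ∀ τ, l (τ + T) = l τ) (hlne : ∀ τ, l τ ≠ 0)
    (E E' : ℝ → Matrix (Fin (n + 1)) (Fin (n + 1)) ℝ)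
    (hE : ∀ τ i j, HasDerivAt (fun t => E t i j) (E' τ i j) τ)
    (hEper : ∀ τ, E (τ + T) = E τ)
    (hEinv : ∀ τ, IsUnit (E τ).det)
    (hEcol : ∀ τ i, E τ i 0 = l τ * b (γ τ) i)
    (Mt : ℝ → Matrix (Fin n) (Fin n) ℝ)
    (hMt : ∀ τ, Mt τ =
      ((E τ)⁻¹ * J τ * E τ - (E τ)⁻¹ * E' τ).submatrix Fin.succ Fin.succ)
    (ΦJ : ℝ → Matrix (Fin (n + 1)) (Fin (n + 1)) ℝ)
    (hΦJ0 : ΦJ 0 = 1)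
    (hΦJ : ∀ τ i j, HasDerivAt (fun t => ΦJ t i j) ((J τ * ΦJ τ) i j) τ)
    (ΦM : ℝ → Matrix (Fin n) (Fin n) ℝ)
    (hΦM0 : ΦM 0 = 1)
    (hΦM : ∀ τ i j, HasDerivAt (fun t => ΦM t i j) ((Mt τ * ΦM τ) i j) τ) :
    (ΦJ T).charpoly = (Polynomial.X - 1) * (ΦM T).charpoly ∧
    spectrum ℂ ((ΦJ T).map Complex.ofReal) =
      insert (1 : ℂ) (spectrum ℂ ((ΦM T).map Complex.ofReal)) ∧
    ((∀ μ ∈ spectrum ℂ ((ΦM T).map Complex.ofReal), ‖μ‖ < 1) ↔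
      (∀ μ ∈ (((ΦJ T).map Complex.ofReal).charpoly.roots.erase 1), ‖μ‖ < 1)) := by
  classical
  set φ : ℝ → Fin (n + 1) → ℝ := fun τ => b (γ τ) with hφdef
  have hφ : ∀ τ, HasDerivAt φ (J τ *ᵥ φ τ) τ := by
    intro τ
    have h := (hb τ).comp_hasDerivAt τ (hγ τ)
    simp at h
    exact h
  have hγT : γ T = γ 0 := by have := hγper 0; rwa [zero_add] at this
  have hET : E T = E 0 := by have := hEper 0; rwa [zero_add] at this
  have hφT : φ T = φ 0 := by simp only [hφdef, hγT]
  -- the special solution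
  have hφJ : ∀ τ, ΦJ τ *ᵥ φ 0 = φ τ := by
    have hd : ∀ τ, HasDerivAt (fun t => ΦJ t *ᵥ φ 0) (J τ *ᵥ (ΦJ τ *ᵥ φ 0)) τ := by
      intro τ
      have h := Stmt7Aux.hasDerivAt_mulVec (A := fun t => ΦJ t) (x := fun _ => φ 0)
        (A' := J τ * ΦJ τ) (x' := 0) (fun i j => hΦJ τ i j) (hasDerivAt_const τ (φ 0))
      simpa [Matrix.mulVec_zero, Matrix.mulVec_mulVec] using h
    exact Stmt7Aux.ode_unique J hJcont (t₀ := 0) hd hφ (by rw [hΦJ0, Matrix.one_mulVec])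
  -- invertibility of the fundamental solution
  have hΦJdet : ∀ τ, IsUnit (ΦJ τ).det := by
    intro τ
    rw [← Matrix.isUnit_iff_isUnit_det, ← Matrix.mulVec_injective_iff_isUnit]
    intro x y hxy
    have hker : ∀ v, ΦJ τ *ᵥ v = 0 → v = 0 := by
      intro v hv
      have hfd : ∀ s, HasDerivAt (fun t => ΦJ t *ᵥ v) (J s *ᵥ (ΦJ s *ᵥ v)) s := by
        intro s
        have h := Stmt7Aux.hasDerivAt_mulVec (A := fun t => ΦJ t) (x := fun _ => v)
          (A' := J s * ΦJ s) (x' := 0) (fun i j => hΦJ s i j) (hasDerivAt_const s v)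
        simpa [Matrix.mulVec_zero, Matrix.mulVec_mulVec] using h
      have hzd : ∀ s : ℝ, HasDerivAt (fun _ : ℝ => (0 : Fin (n + 1) → ℝ))
          (J s *ᵥ (0 : Fin (n + 1) → ℝ)) s := by
        intro s
        simpa [Matrix.mulVec_zero] using hasDerivAt_const s (0 : Fin (n + 1) → ℝ)
      have h := Stmt7Aux.ode_unique J hJcont (t₀ := τ) hfd hzd hv 0
      rw [hΦJ0, Matrix.one_mulVec] at h
      exact h
    have h := hker (x - y) (by rw [Matrix.mulVec_sub, hxy, sub_self])
    exact sub_eq_zero.mp h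
  set F : ℝ → Matrix (Fin (n + 1)) (Fin (n + 1)) ℝ := fun τ => (E τ)⁻¹ with hFdef
  have hF : ∀ τ i j, HasDerivAt (fun t => F t i j) ((-(F τ * E' τ * F τ)) i j) τ :=
    Stmt7Aux.matinv_hasDerivAt hE hEinv
  set Q : ℝ → Matrix (Fin (n + 1)) (Fin (n + 1)) ℝ := fun τ => (ΦJ τ)⁻¹ with hQdef
  have hFE : ∀ τ, F τ * E τ = 1 := fun τ => Matrix.nonsing_inv_mul _ (hEinv τ)
  have hEF : ∀ τ, E τ * F τ = 1 := fun τ => Matrix.mul_nonsing_inv _ (hEinv τ)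
  have hQΦ : ∀ τ, Q τ * ΦJ τ = 1 := fun τ => Matrix.nonsing_inv_mul _ (hΦJdet τ)
  have hΦQ : ∀ τ, ΦJ τ * Q τ = 1 := fun τ => Matrix.mul_nonsing_inv _ (hΦJdet τ)
  have hQ : ∀ τ i j, HasDerivAt (fun t => Q t i j) ((-(Q τ * J τ)) i j) τ := by
    intro τ i j
    have h := Stmt7Aux.matinv_hasDerivAt (E := ΦJ) (E' := fun τ => J τ * ΦJ τ) hΦJ hΦJdet τ i j
    have heq : -((ΦJ τ)⁻¹ * (J τ * ΦJ τ) * (ΦJ τ)⁻¹) = -(Q τ * J τ) := by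
      have h1 : (ΦJ τ)⁻¹ * (J τ * ΦJ τ) * (ΦJ τ)⁻¹ = (ΦJ τ)⁻¹ * J τ * (ΦJ τ * (ΦJ τ)⁻¹) := by
        simp only [Matrix.mul_assoc]
      rw [h1, hΦQ τ, Matrix.mul_one]
    rwa [heq] at h
  set M : ℝ → Matrix (Fin (n + 1)) (Fin (n + 1)) ℝ :=
    fun τ => F τ * J τ * E τ - F τ * E' τ with hMdef
  have hMt' : ∀ τ, Mt τ = (M τ).submatrix Fin.succ Fin.succ := hMt
  set u : Fin (n + 1) → ℝ := Pi.single 0 1 with hu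
  have hEu : ∀ τ, E τ *ᵥ u = l τ • φ τ := by
    intro τ
    rw [hu, Matrix.mulVec_single]
    funext i
    simp [hEcol τ i, hφdef]
  have hE'u : ∀ τ, E' τ *ᵥ u = deriv l τ • φ τ + l τ • (J τ *ᵥ φ τ) := by
    intro τ
    rw [hu, Matrix.mulVec_single]
    funext i
    have h1 : HasDerivAt (fun t => E t i 0) (deriv l τ * φ τ i + l τ * (J τ *ᵥ φ τ) i) τ := by
      have heqf : (fun t => E t i 0) = fun t => l t * φ t i := funext fun t => hEcol t i
      rw [heqf]
      exact ((hl τ).hasDerivAt).mul (hasDerivAt_pi.1 (hφ τ) i)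
    have h2 := (hE τ i 0).unique h1
    simp [h2]
  have hFφ : ∀ τ, F τ *ᵥ φ τ = (l τ)⁻¹ • u := by
    intro τ
    have h := congrArg (fun z => F τ *ᵥ z) (hEu τ)
    simp only [Matrix.mulVec_mulVec, Matrix.mulVec_smul] at h
    rw [hFE τ, Matrix.one_mulVec] at h
    exact ((inv_smul_eq_iff₀ (hlne τ)).2 h).symm
  have hMu : ∀ τ, M τ *ᵥ u = (-(deriv l τ) * (l τ)⁻¹) • u := by
    intro τ
    have h1 : M τ *ᵥ u = F τ *ᵥ (l τ • (J τ *ᵥ φ τ))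
        - F τ *ᵥ (deriv l τ • φ τ + l τ • (J τ *ᵥ φ τ)) := by
      show (F τ * J τ * E τ - F τ * E' τ) *ᵥ u = _
      rw [Matrix.sub_mulVec]
      rw [show (F τ * J τ * E τ) *ᵥ u = F τ *ᵥ (J τ *ᵥ (E τ *ᵥ u)) by
        simp [Matrix.mulVec_mulVec, Matrix.mul_assoc]]
      rw [show (F τ * E' τ) *ᵥ u = F τ *ᵥ (E' τ *ᵥ u) by simp [Matrix.mulVec_mulVec]]
      rw [hEu, hE'u, Matrix.mulVec_smul]
    rw [h1, Matrix.mulVec_add, Matrix.mulVec_smul, Matrix.mulVec_smul]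
    have h2 : ∀ x y : Fin (n + 1) → ℝ, l τ • y - (deriv l τ • x + l τ • y)
        = (-(deriv l τ)) • x := by
      intro x y
      rw [neg_smul]
      abel
    rw [h2, hFφ, smul_smul]
  have hMcol : ∀ τ (i : Fin n), M τ i.succ 0 = 0 := by
    intro τ i
    have h := congrFun (hMu τ) i.succ
    rw [hu] at h
    rw [Matrix.mulVec_single] at h
    simp only [Pi.smul_apply, Pi.single_eq_of_ne (Fin.succ_ne_zero i), smul_eq_mul,
      mul_zero, mul_one, Matrix.col_apply, op_smul_eq_mul] at h
    exact h
  have key : ∀ x : ℝ → Fin n → ℝ, (∀ τ, HasDerivAt x (Mt τ *ᵥ x τ) τ) → x 0 = 0 →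
      ∀ τ, x τ = 0 := by
    intro x x_d x0
    set c : ℝ → Fin (n + 1) → ℝ := fun τ => Fin.cons 0 (x τ) with hc
    have hcd : ∀ τ, HasDerivAt c (Fin.cons 0 (Mt τ *ᵥ x τ)) τ := by
      intro τ
      rw [hasDerivAt_pi]
      intro i
      refine Fin.cases ?_ ?_ i
      · simpa [hc] using hasDerivAt_const τ (0 : ℝ)
      · intro k
        simpa [hc] using hasDerivAt_pi.1 (x_d τ) k
    set v : ℝ → Fin (n + 1) → ℝ := fun τ => E τ *ᵥ c τ with hv
    set g : ℝ → ℝ := fun τ => (M τ *ᵥ c τ) 0 with hg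
    have hcons : ∀ τ, Fin.cons (0 : ℝ) (Mt τ *ᵥ x τ) = M τ *ᵥ c τ - g τ • u := by
      intro τ
      funext i
      refine Fin.cases ?_ ?_ i
      · simp [hg, hu]
      · intro k
        have hMk : (M τ *ᵥ c τ) k.succ = (Mt τ *ᵥ x τ) k := by
          simp [Matrix.mulVec, dotProduct, Fin.sum_univ_succ, hc, hMt' τ,
            Matrix.submatrix_apply]
        simp [hMk, hu, Pi.single_eq_of_ne (Fin.succ_ne_zero k)]
    have hvd : ∀ τ, HasDerivAt v (J τ *ᵥ v τ - (g τ * l τ) • φ τ) τ := by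
      intro τ
      have h := Stmt7Aux.hasDerivAt_mulVec (A := E) (x := c) (A' := E' τ)
        (x' := Fin.cons 0 (Mt τ *ᵥ x τ)) (hE τ) (hcd τ)
      have heq : E' τ *ᵥ c τ + E τ *ᵥ (Fin.cons (0 : ℝ) (Mt τ *ᵥ x τ))
          = J τ *ᵥ v τ - (g τ * l τ) • φ τ := by
        rw [hcons τ, Matrix.mulVec_sub]
        have hEM : E τ * M τ = J τ * E τ - E' τ := by
          show E τ * (F τ * J τ * E τ - F τ * E' τ) = _
          rw [Matrix.mul_sub]
          congr 1
          · calc E τ * (F τ * J τ * E τ) = (E τ * F τ) * (J τ * E τ) := by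
                  simp only [Matrix.mul_assoc]
              _ = J τ * E τ := by rw [hEF τ, Matrix.one_mul]
          · calc E τ * (F τ * E' τ) = (E τ * F τ) * E' τ := by rw [Matrix.mul_assoc]
              _ = E' τ := by rw [hEF τ, Matrix.one_mul]
        have h1 : E τ *ᵥ (M τ *ᵥ c τ) = J τ *ᵥ v τ - E' τ *ᵥ c τ := by
          rw [Matrix.mulVec_mulVec, hEM, Matrix.sub_mulVec, ← Matrix.mulVec_mulVec]
        have h2 : E τ *ᵥ (g τ • u) = (g τ * l τ) • φ τ := by
          rw [Matrix.mulVec_smul, hEu τ, smul_smul]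
        rw [h1, h2]
        abel
      rw [← heq]
      exact h
    set w : ℝ → Fin (n + 1) → ℝ := fun τ => Q τ *ᵥ v τ with hw
    have hwd : ∀ τ, HasDerivAt w ((-(g τ * l τ)) • φ 0) τ := by
      intro τ
      have h := Stmt7Aux.hasDerivAt_mulVec (A := Q) (x := v) (A' := -(Q τ * J τ))
        (x' := J τ *ᵥ v τ - (g τ * l τ) • φ τ) (hQ τ) (hvd τ)
      have heq : (-(Q τ * J τ)) *ᵥ v τ + Q τ *ᵥ (J τ *ᵥ v τ - (g τ * l τ) • φ τ)
          = (-(g τ * l τ)) • φ 0 := by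
        rw [Matrix.neg_mulVec, Matrix.mulVec_sub, Matrix.mulVec_smul]
        rw [show Q τ *ᵥ (J τ *ᵥ v τ) = (Q τ * J τ) *ᵥ v τ from Matrix.mulVec_mulVec _ _ _]
        rw [show Q τ *ᵥ φ τ = φ 0 by
          rw [← hφJ τ, Matrix.mulVec_mulVec, hQΦ τ, Matrix.one_mulVec]]
        rw [neg_smul]
        abel
      rw [← heq]
      exact h
    obtain ⟨j0, hj0⟩ : ∃ j0, φ 0 j0 ≠ 0 := by
      by_contra hcon
      push_neg at hcon
      exact hγ' 0 (funext fun i => hcon i)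
    have hw0 : w 0 = 0 := by
      have hc00 : c 0 = 0 := by
        funext i
        refine Fin.cases ?_ ?_ i
        · simp [hc]
        · intro k
          simp [hc, x0]
      simp [hw, hv, hc00, Matrix.mulVec_zero]
    have hpair : ∀ τ i, w τ i * φ 0 j0 = w τ j0 * φ 0 i := by
      intro τ i
      have hpd : ∀ s : ℝ, HasDerivAt (fun t => w t i * φ 0 j0 - w t j0 * φ 0 i) 0 s := by
        intro s
        have h1 := (hasDerivAt_pi.1 (hwd s) i).mul_const (φ 0 j0)
        have h2 := (hasDerivAt_pi.1 (hwd s) j0).mul_const (φ 0 i)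
        have h := h1.sub h2
        have hz : ((-(g s * l s)) • φ 0) i * φ 0 j0 - ((-(g s * l s)) • φ 0) j0 * φ 0 i = 0 := by
          simp only [Pi.smul_apply, smul_eq_mul]
          ring
        rwa [hz] at h
      have hconst := is_const_of_deriv_eq_zero (f := fun t => w t i * φ 0 j0 - w t j0 * φ 0 i)
        (fun s => (hpd s).differentiableAt) (fun s => (hpd s).deriv) τ 0
      rw [hw0] at hconst
      simp only [Pi.zero_apply, zero_mul, sub_zero, sub_self] at hconst
      linarith [hconst]
    intro τ
    set h0 : ℝ := w τ j0 / φ 0 j0 with hh0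
    have hwv : w τ = h0 • φ 0 := by
      funext i
      rw [hh0, Pi.smul_apply, smul_eq_mul, div_mul_eq_mul_div, eq_div_iff hj0, ← hpair τ i]
    have hv1 : v τ = h0 • φ τ := by
      have hΦw : v τ = ΦJ τ *ᵥ w τ := by
        rw [hw, Matrix.mulVec_mulVec, hΦQ τ, Matrix.one_mulVec]
      rw [hΦw, hwv, Matrix.mulVec_smul, hφJ τ]
    have hEeq : E τ *ᵥ c τ = E τ *ᵥ ((h0 / l τ) • u) := by
      rw [Matrix.mulVec_smul, hEu τ, smul_smul, div_mul_cancel₀ _ (hlne τ)]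
      exact hv1
    have hcc : c τ = (h0 / l τ) • u := by
      have h := congrArg (fun z => F τ *ᵥ z) hEeq
      simpa [Matrix.mulVec_mulVec, hFE τ, Matrix.one_mulVec] using h
    funext i
    have h := congrFun hcc i.succ
    rw [hu] at h
    simp only [hc, Fin.cons_succ, Pi.smul_apply,
      Pi.single_eq_of_ne (Fin.succ_ne_zero i), smul_eq_mul, mul_zero] at h
    simpa using h
  -- the conjugated fundamental solution
  set W : ℝ → Matrix (Fin (n + 1)) (Fin (n + 1)) ℝ := fun τ => F τ * ΦJ τ * E 0 with hWdef
  have hWd : ∀ τ i j, HasDerivAt (fun t => W t i j) ((M τ * W τ) i j) τ := by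
    intro τ i j
    have hG : ∀ i j, HasDerivAt (fun t => (F t * ΦJ t) i j)
        ((-(F τ * E' τ * F τ) * ΦJ τ + F τ * (J τ * ΦJ τ)) i j) τ :=
      Stmt7Aux.hasDerivAt_entry_mul (hF τ) (hΦJ τ)
    have hconst : ∀ i j, HasDerivAt (fun _ : ℝ => E 0 i j) ((0 : Matrix (Fin (n + 1)) (Fin (n + 1)) ℝ) i j) τ := by
      intro i j
      simpa using hasDerivAt_const τ (E 0 i j)
    have h := Stmt7Aux.hasDerivAt_entry_mul (A := fun t => F t * ΦJ t) (B := fun _ => E 0)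
      hG hconst i j
    have hMF : M τ * F τ = F τ * J τ + (-(F τ * E' τ * F τ)) := by
      show (F τ * J τ * E τ - F τ * E' τ) * F τ = _
      have hnr : (F τ * J τ * E τ - F τ * E' τ) * F τ
          = F τ * J τ * (E τ * F τ) - F τ * E' τ * F τ := by noncomm_ring
      rw [hnr, hEF τ, Matrix.mul_one, sub_eq_add_neg]
    have hval : (-(F τ * E' τ * F τ) * ΦJ τ + F τ * (J τ * ΦJ τ)) * E 0
        + (F τ * ΦJ τ) * (0 : Matrix (Fin (n + 1)) (Fin (n + 1)) ℝ) = (M τ * W τ) := by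
      rw [Matrix.mul_zero, add_zero]
      have h1 : M τ * W τ = (M τ * F τ) * (ΦJ τ * E 0) := by
        show M τ * (F τ * ΦJ τ * E 0) = _
        simp only [Matrix.mul_assoc]
      rw [h1, hMF]
      noncomm_ring
    rw [← hval]
    exact h
  have hW0 : W 0 = 1 := by
    show F 0 * ΦJ 0 * E 0 = 1
    rw [hΦJ0, Matrix.mul_one, hFE 0]
  have hsub : ∀ i j, W T i.succ j.succ = ΦM T i j := by
    have hj : ∀ j : Fin n, ∀ i : Fin n, W T i.succ j.succ = ΦM T i j := by
      intro j
      set x : ℝ → Fin n → ℝ := fun τ k => W τ k.succ j.succ - ΦM τ k j with hx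
      have hxd : ∀ τ, HasDerivAt x (Mt τ *ᵥ x τ) τ := by
        intro τ
        rw [hasDerivAt_pi]
        intro k
        have h1 := (hWd τ k.succ j.succ).sub (hΦM τ k j)
        have heq : (M τ * W τ) k.succ j.succ - (Mt τ * ΦM τ) k j = (Mt τ *ᵥ x τ) k := by
          rw [Matrix.mul_apply, Fin.sum_univ_succ, hMcol τ k, zero_mul, zero_add]
          simp [hx, Matrix.mul_apply, Matrix.mulVec, dotProduct, hMt' τ,
            Matrix.submatrix_apply, mul_sub, Finset.sum_sub_distrib]
        rwa [heq] at h1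
      have hx0 : x 0 = 0 := by
        funext k
        simp only [hx, hW0, hΦM0, Pi.zero_apply]
        rw [Matrix.one_apply, Matrix.one_apply]
        simp [Fin.succ_inj]
      intro i
      have h := congrFun (key x hxd hx0 T) i
      simp only [hx, Pi.zero_apply] at h
      linarith [h]
    intro i j
    exact hj j i
  have hcol : ∀ i, W T i 0 = u i := by
    have hWu : W T *ᵥ u = u := by
      show (F T * ΦJ T * E 0) *ᵥ u = u
      rw [← Matrix.mulVec_mulVec, ← Matrix.mulVec_mulVec, hEu 0, Matrix.mulVec_smul, hφJ T,
        hφT, ← hEu 0, ← hET, Matrix.mulVec_mulVec, hFE T, Matrix.one_mulVec]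
    intro i
    have h := congrFun hWu i
    rw [hu] at h
    rw [Matrix.mulVec_single] at h
    rw [hu, ← h]
    simp
  have hWT : W T = (E 0)⁻¹ * ΦJ T * E 0 := by
    show (E T)⁻¹ * ΦJ T * E 0 = (E 0)⁻¹ * ΦJ T * E 0
    rw [hET]
  have hchar : (ΦJ T).charpoly = (W T).charpoly := by
    rw [hWT, Stmt7Aux.charpoly_conj (E 0) (ΦJ T) (hEinv 0)]
  have hsubW : (W T).submatrix Fin.succ Fin.succ = ΦM T := by
    ext i j
    rw [Matrix.submatrix_apply]
    exact hsub i j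
  have hcol' : ∀ i, W T i 0 = (Pi.single (0 : Fin (n + 1)) (1 : ℝ) : Fin (n + 1) → ℝ) i := by
    intro i; rw [hcol i, hu]
  have part1 : (ΦJ T).charpoly = (Polynomial.X - 1) * (ΦM T).charpoly := by
    rw [hchar, Stmt7Aux.charpoly_block (W T) hcol', hsubW]
  have hmapJ : ((ΦJ T).map Complex.ofReal).charpoly
      = (Polynomial.X - 1) * ((ΦM T).map Complex.ofReal).charpoly := by
    have h1 : (ΦJ T).map Complex.ofReal = (ΦJ T).map (Complex.ofRealHom : ℝ →+* ℂ) := rfl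
    have h2 : (ΦM T).map Complex.ofReal = (ΦM T).map (Complex.ofRealHom : ℝ →+* ℂ) := rfl
    rw [h1, h2, Matrix.charpoly_map, Matrix.charpoly_map, part1, Polynomial.map_mul]
    congr 1
    rw [Polynomial.map_sub, Polynomial.map_X, Polynomial.map_one]
  have hM0 : ((ΦM T).map Complex.ofReal).charpoly ≠ 0 := (Matrix.charpoly_monic _).ne_zero
  refine ⟨part1, ?_, ?_⟩
  · ext μ
    rw [Stmt7Aux.mem_spectrum_iff_root, hmapJ, Polynomial.eval_mul, Polynomial.eval_sub,
      Polynomial.eval_X, Polynomial.eval_one, mul_eq_zero, sub_eq_zero, Set.mem_insert_iff,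
      Stmt7Aux.mem_spectrum_iff_root]
  · have hroots : (((ΦJ T).map Complex.ofReal).charpoly).roots.erase 1
        = (((ΦM T).map Complex.ofReal).charpoly).roots := by
      have hX0 : (Polynomial.X - 1 : Polynomial ℂ) ≠ 0 := by
        rw [show (Polynomial.X - 1 : Polynomial ℂ) = Polynomial.X - Polynomial.C 1 by
          rw [Polynomial.C_1]]
        exact Polynomial.X_sub_C_ne_zero 1
      rw [hmapJ, Polynomial.roots_mul (mul_ne_zero hX0 hM0),
        show (Polynomial.X - 1 : Polynomial ℂ) = Polynomial.X - Polynomial.C 1 by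
          rw [Polynomial.C_1],
        Polynomial.roots_X_sub_C, Multiset.singleton_add, Multiset.erase_cons_head]
    rw [hroots]
    constructor
    · intro h μ hμ
      refine h μ ?_
      rw [Stmt7Aux.mem_spectrum_iff_root]
      exact (Polynomial.mem_roots'.mp hμ).2
    · intro h μ hμ
      rw [Stmt7Aux.mem_spectrum_iff_root] at hμ
      exact h μ (Polynomial.mem_roots'.mpr ⟨hM0, hμ⟩)
end

section
/- Let M, A : [0,T] → ℝ be continuous with A(s) ≥ 0 for all s and ∫₀^T M(s) ds ≠ 0, and define H₀ := [∫₀^T A(s) · exp(2∫_s^T M(σ) dσ) ds] / [1 − exp(2∫₀^T M(s) ds)]. Then H₀ > 0 if and only if both ∫₀^T M(s) ds < 0 and A is not identically zero on [0,T]. -/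
open intervalIntegral

/-- For continuous `M, A` on `[0,T]` with `A ≥ 0` and `∫₀^T M ≠ 0`, the
initial value `H₀ = (∫₀^T A(s) exp(2∫_s^T M) ds) / (1 - exp(2∫₀^T M))` of the periodic
solution of the scalar Lyapunov equation is positive iff `∫₀^T M < 0` and `A` is not
identically zero on `[0,T]`. -/
theorem stmt_15 (T : ℝ) (hT : 0 < T) (M A : ℝ → ℝ)
    (hM : ContinuousOn M (Set.Icc 0 T)) (hA : ContinuousOn A (Set.Icc 0 T))
    (hA0 : ∀ s ∈ Set.Icc (0:ℝ) T, 0 ≤ A s)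
    (hMint : (∫ s in (0:ℝ)..T, M s) ≠ 0) :
    0 < (∫ s in (0:ℝ)..T, A s * Real.exp (2 * ∫ σ in s..T, M σ)) /
        (1 - Real.exp (2 * ∫ s in (0:ℝ)..T, M s)) ↔
      ((∫ s in (0:ℝ)..T, M s) < 0 ∧ ∃ s ∈ Set.Icc (0:ℝ) T, A s ≠ 0) := by
  set I := (∫ s in (0:ℝ)..T, M s) with hI
  set f : ℝ → ℝ := fun s => A s * Real.exp (2 * ∫ σ in s..T, M σ) with hf
  set N := (∫ s in (0:ℝ)..T, f s) with hN
  set D := 1 - Real.exp (2 * I) with hD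
  have huIcc : Set.uIcc (0:ℝ) T = Set.Icc 0 T := Set.uIcc_of_le hT.le
  -- f nonneg on Icc
  have hfnn : ∀ s ∈ Set.Icc (0:ℝ) T, 0 ≤ f s := fun s hs =>
    mul_nonneg (hA0 s hs) (Real.exp_pos _).le
  have hNnn : 0 ≤ N := intervalIntegral.integral_nonneg hT.le hfnn
  -- D sign
  have hDiff : D > 0 ↔ I < 0 := by
    constructor
    · intro h
      by_contra hcon
      push_neg at hcon
      have : (1:ℝ) ≤ Real.exp (2 * I) := by
        rw [← Real.exp_zero]
        exact Real.exp_le_exp.mpr (by linarith)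
      simp [hD] at h; linarith
    · intro h
      have : Real.exp (2 * I) < 1 := by
        rw [← Real.exp_zero]
        exact Real.exp_lt_exp.mpr (by linarith)
      simp [hD]; linarith
  constructor
  · rintro hpos
    rcases div_pos_iff.mp hpos with ⟨hN0, hD0⟩ | ⟨hN0, _⟩
    · refine ⟨hDiff.mp hD0, ?_⟩
      by_contra hcon
      push_neg at hcon
      have : N = 0 := by
        have h0 : N = ∫ s in (0:ℝ)..T, (0:ℝ) := by
          apply intervalIntegral.integral_congr
          intro s hs
          rw [huIcc] at hs
          simp [hf, hcon s hs]
        simpa using h0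
      linarith
    · linarith
  · rintro ⟨hIneg, s₀, hs₀, hAs₀⟩
    have hD0 : 0 < D := hDiff.mpr hIneg
    -- f is continuous on Icc
    have hMint' : MeasureTheory.IntegrableOn M (Set.uIcc 0 T) := by
      rw [huIcc]; exact hM.integrableOn_compact isCompact_Icc
    have hprim : ContinuousOn (fun s => ∫ σ in s..T, M σ) (Set.Icc 0 T) := by
      rw [← huIcc]
      exact intervalIntegral.continuousOn_primitive_interval_left hMint'
    have hfc : ContinuousOn f (Set.Icc 0 T) :=
      hA.mul ((Real.continuous_exp.comp_continuousOn (continuousOn_const.mul hprim)))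
    -- f s₀ > 0
    have hfs₀ : 0 < f s₀ :=
      mul_pos (lt_of_le_of_ne (hA0 s₀ hs₀) (Ne.symm hAs₀)) (Real.exp_pos _)
    -- positivity of N
    have hNpos : 0 < N := by
      have hint : MeasureTheory.IntegrableOn f (Set.Ioc 0 T) :=
        (hfc.integrableOn_compact isCompact_Icc).mono Set.Ioc_subset_Icc_self le_rfl
      have hae : 0 ≤ᵐ[MeasureTheory.volume.restrict (Set.Ioc 0 T)] f := by
        refine (MeasureTheory.ae_restrict_iff' measurableSet_Ioc).mpr ?_
        exact MeasureTheory.ae_of_all _ fun x hx => hfnn x (Set.Ioc_subset_Icc_self hx)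
      rw [hN, intervalIntegral.integral_of_le hT.le]
      rw [MeasureTheory.setIntegral_pos_iff_support_of_nonneg_ae hae hint]
      -- find a subinterval where f > 0
      have hcw : ∀ᶠ x in nhdsWithin s₀ (Set.Icc 0 T), 0 < f x :=
        (hfc s₀ hs₀).eventually (Filter.Tendsto.eventually_const_lt hfs₀ Filter.tendsto_id) |>.mono
          (fun x hx => hx)
      rcases Metric.mem_nhdsWithin_iff.mp hcw with ⟨ε, hε, hball⟩
      set a := max (s₀ - ε) 0 with ha
      set b := min (s₀ + ε) T with hb
      have hab : a < b := by
        rcases hs₀ with ⟨h1, h2⟩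
        simp only [ha, hb, max_lt_iff, lt_min_iff]
        constructor <;> constructor <;> linarith
      have hsub : Set.Ioo a b ⊆ Function.support f ∩ Set.Ioc 0 T := by
        intro x hx
        have hx1 : x ∈ Set.Icc (0:ℝ) T :=
          ⟨le_of_lt (lt_of_le_of_lt (le_max_right _ _) hx.1),
           le_of_lt (lt_of_lt_of_le hx.2 (min_le_right _ _))⟩
        have hxd : dist x s₀ < ε := by
          rw [Real.dist_eq, abs_lt]
          constructor
          · have := lt_of_le_of_lt (le_max_left _ _) hx.1; linarith
          · have := lt_of_lt_of_le hx.2 (min_le_left _ _); linarith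
        refine ⟨(hball ⟨Metric.mem_ball.mpr hxd, hx1⟩).ne', ?_⟩
        exact ⟨lt_of_le_of_lt (le_max_right _ _) hx.1,
          le_of_lt (lt_of_lt_of_le hx.2 (min_le_right _ _))⟩
      calc (0:ENNReal) < MeasureTheory.volume (Set.Ioo a b) := by
            rw [Real.volume_Ioo]; simp [hab]
        _ ≤ _ := MeasureTheory.measure_mono hsub
    exact div_pos hNpos hD0
end
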